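/- arXiv:1803.00988 — 6 statements merged into one kernel-verified Lean document; each statement's English description precedes it below -/
import Mathlib

section
/- If p/q is a reduced fraction, then the product over j from 0 to q-1 of |1 + e^{-2πi(θ + jp/q)}| equals 2|sin(πq(θ + 1/2))| for all real θ. -/
open Real

lemma prod_one_sub_zeta_pow_mul {q : ℕ} (hq : 0 < q) {ζ α : ℂ}
    (hζ : IsPrimitiveRoot ζ q) :
    ∏ i ∈ Finset.range q, (1 - ζ ^ i * α) = 1 - α ^ q := by
  have h := congrArg (Polynomial.eval 1)
    (X_pow_sub_C_eq_prod hζ hq (rfl : α ^ q = α ^ q))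
  rw [Polynomial.eval_prod] at h
  simpa using h.symm

lemma abs_one_sub_exp_neg (t : ℝ) :
    ‖(1 - Complex.exp (-(t * Complex.I)))‖ = 2 * |Real.sin (t / 2)| := by
  have key : (1 : ℂ) - Complex.exp (-(t * Complex.I)) =
      ((1 - Real.cos t : ℝ) : ℂ) + ((Real.sin t : ℝ) : ℂ) * Complex.I := by
    have h : (-(↑t * Complex.I) : ℂ) = ((-t : ℝ) : ℂ) * Complex.I := by push_cast; ring
    rw [h, Complex.exp_mul_I]
    simp [← Complex.ofReal_cos, ← Complex.ofReal_sin, Real.cos_neg, Real.sin_neg]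
    ring
  rw [key, Complex.norm_def, Complex.normSq_add_mul_I]
  have h2 : (1 - Real.cos t) ^ 2 + Real.sin t ^ 2 = (2 * |Real.sin (t / 2)|) ^ 2 := by
    have A := Real.sin_sq_add_cos_sq t
    have C := Real.sin_sq_add_cos_sq (t / 2)
    have B' : Real.cos (t / 2) ^ 2 = 1 / 2 + Real.cos t / 2 := by
      have := Real.cos_sq (t / 2)
      rwa [show 2 * (t / 2) = t by ring] at this
    rw [mul_pow, sq_abs]
    linear_combination A - 4 * C + 4 * B'
  rw [h2, Real.sqrt_sq (by positivity)]

/-- If `p/q` is a reduced fraction, then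
`∏_{j=0}^{q-1} |1 + e^{-2πi(θ + j p/q)}| = 2 |sin (π q (θ + 1/2))|` for every real `θ`. -/
theorem stmt_1 (p : ℤ) (q : ℕ) (hq : 1 ≤ q) (hpq : Int.gcd p (q : ℤ) = 1) (θ : ℝ) :
    ∏ j ∈ Finset.range q,
        ‖(1 + Complex.exp (-2 * π * Complex.I * (θ + (j : ℝ) * (p : ℝ) / (q : ℝ))))‖
      = 2 * |Real.sin (π * q * (θ + 1 / 2))| := by
  have hq0 : 0 < q := hq
  have hqR : (q : ℂ) ≠ 0 := Nat.cast_ne_zero.mpr hq0.ne'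
  set ζ : ℂ := Complex.exp (2 * π * Complex.I / q) ^ (-p : ℤ) with hζdef
  have hζ : IsPrimitiveRoot ζ q := by
    apply (Complex.isPrimitiveRoot_exp q hq0.ne').zpow_of_gcd_eq_one
    rwa [Int.gcd, Int.natAbs_neg]
  set z : ℂ := Complex.exp (-2 * π * Complex.I * θ) with hz
  have hfac : ∀ j ∈ Finset.range q,
      ‖(1 + Complex.exp (-2 * π * Complex.I * (θ + (j : ℝ) * (p : ℝ) / (q : ℝ))))‖
        = ‖(1 - ζ ^ j * (-z))‖ := by
    intro j _
    congr 1
    have h : (1 : ℂ) - ζ ^ j * (-z) = 1 + ζ ^ j * z := by ring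
    rw [h]
    congr 1
    rw [hζdef, ← zpow_natCast _ j, ← zpow_mul, ← Complex.exp_int_mul, hz, ← Complex.exp_add]
    congr 1
    push_cast
    field_simp
    ring
  rw [Finset.prod_congr rfl hfac, ← norm_prod, prod_one_sub_zeta_pow_mul hq0 hζ]
  have hm : Complex.exp ((π : ℂ) * Complex.I * (-1)) = -1 := by
    rw [mul_neg_one, Complex.exp_neg, Complex.exp_pi_mul_I]
    norm_num
  have hnegz : -z = Complex.exp (-(2 * π * (θ + 1/2) * Complex.I)) := by
    rw [hz]
    have h : (-(2 * (π : ℂ) * (θ + 1/2) * Complex.I) : ℂ) =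
        -2 * π * Complex.I * θ + π * Complex.I * (-1) := by ring
    rw [h, Complex.exp_add, hm]
    ring
  have hpow : (-z) ^ q = Complex.exp (-((2 * π * q * (θ + 1/2) : ℝ) * Complex.I)) := by
    rw [hnegz, ← Complex.exp_nat_mul]
    congr 1
    push_cast
    ring
  rw [hpow, abs_one_sub_exp_neg]
  congr 2
  ring
end

section
/- (Lidskii inequality) Let A, B be n×n Hermitian matrices with eigenvalues E_1(·) ≥ ··· ≥ E_n(·). For any indices 1 ≤ i_1 < ··· < i_k ≤ n, one has E_{i_1}(A+B) + ··· + E_{i_k}(A+B) ≤ E_{i_1}(A) + ··· + E_{i_k}(A) + E_1(B) + ··· + E_k(B). -/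
open Matrix
open scoped ComplexOrder
variable {n : ℕ}
variable {n : ℕ}

local notation "V" => EuclideanSpace ℂ (Fin n)

lemma equiv_sum (s : Finset (Fin n)) (f : Fin n → V) :
    WithLp.equiv 2 (Fin n → ℂ) (∑ j ∈ s, f j) = ∑ j ∈ s, WithLp.equiv 2 (Fin n → ℂ) (f j) := WithLp.ofLp_sum (s := s) (f := f)

lemma equiv_smul (c : ℂ) (v : V) :
    WithLp.equiv 2 (Fin n → ℂ) (c • v) = c • WithLp.equiv 2 (Fin n → ℂ) v := rfl

/-- Rayleigh quotient formula in an eigenbasis. -/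
lemma rayleigh_formula (M : Matrix (Fin n) (Fin n) ℂ) (b : OrthonormalBasis (Fin n) ℂ V)
    (lam : Fin n → ℝ)
    (hMb : ∀ j, M *ᵥ (WithLp.equiv 2 _ (b j)) = lam j • (WithLp.equiv 2 _ (b j)))
    (x : V) :
    Complex.re (star (WithLp.equiv 2 _ x) ⬝ᵥ (M *ᵥ (WithLp.equiv 2 _ x)))
      = ∑ j, lam j * ‖b.repr x j‖^2 := by
  have hx : x = ∑ j, b.repr x j • b j := (b.sum_repr x).symm
  have hMx : M *ᵥ (WithLp.equiv 2 _ x) = WithLp.equiv 2 _ (∑ j, (b.repr x j * (lam j : ℂ)) • b j) := by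
    conv_lhs => rw [hx]
    rw [equiv_sum, ← Matrix.mulVecLin_apply, map_sum (Matrix.mulVecLin M), equiv_sum]
    simp only [Matrix.mulVecLin_apply]
    congr 1
    funext j
    rw [equiv_smul, mulVec_smul, hMb j, equiv_smul, smul_comm,
      RCLike.real_smul_eq_coe_smul (K := ℂ), smul_smul, mul_comm]
    rfl
  rw [hMx, show star (WithLp.equiv 2 _ x) ⬝ᵥ WithLp.equiv 2 _ (∑ j, (b.repr x j * (lam j : ℂ)) • b j)
      = inner ℂ x (∑ j, (b.repr x j * (lam j : ℂ)) • b j) from by rw [dotProduct_comm]; rfl,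
    inner_sum, Complex.re_sum]
  congr 1
  funext j
  rw [inner_smul_right]
  have h1 : (inner ℂ x (b j) : ℂ) = starRingEnd ℂ (b.repr x j) := by
    rw [b.repr_apply_apply, ← inner_conj_symm]
  rw [h1]
  have h2 := Complex.mul_conj (b.repr x j)
  calc (b.repr x j * (lam j : ℂ) * starRingEnd ℂ (b.repr x j)).re
      = ((lam j : ℂ) * (b.repr x j * starRingEnd ℂ (b.repr x j))).re := by ring_nf
    _ = lam j * ‖b.repr x j‖^2 := by
        rw [h2, ← Complex.ofReal_mul, Complex.ofReal_re]
        congr 1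
        rw [← Complex.sq_norm]
variable {n : ℕ}

lemma repr_eq_zero_of_mem_span (b : OrthonormalBasis (Fin n) ℂ (EuclideanSpace ℂ (Fin n)))
    {s : Set (Fin n)} {x : EuclideanSpace ℂ (Fin n)}
    (hx : x ∈ Submodule.span ℂ (⇑b '' s)) {j : Fin n} (hj : j ∉ s) : b.repr x j = 0 := by
  rw [← b.coe_toBasis] at hx
  rw [← b.coe_toBasis_repr_apply]
  have := (b.toBasis.mem_span_image.mp hx)
  by_contra h
  exact hj (this (Finsupp.mem_support_iff.mpr (by simpa using h)))

lemma finrank_span_orthonormal (v : Fin n → EuclideanSpace ℂ (Fin n)) (hv : Orthonormal ℂ v)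
    (s : Set (Fin n)) [Fintype s] :
    Module.finrank ℂ (Submodule.span ℂ (v '' s)) = Fintype.card s := by
  have li : LinearIndependent ℂ (v ∘ (Subtype.val : s → Fin n)) :=
    (hv.comp _ Subtype.val_injective).linearIndependent
  have : v '' s = Set.range (v ∘ (Subtype.val : s → Fin n)) := by
    rw [Set.range_comp, Subtype.range_coe]
  rw [this, finrank_span_eq_card li]
variable {n : ℕ}

lemma sum_sq_repr (b : OrthonormalBasis (Fin n) ℂ (EuclideanSpace ℂ (Fin n)))
    (x : EuclideanSpace ℂ (Fin n)) : ∑ j, ‖b.repr x j‖^2 = ‖x‖^2 := by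
  have h : ‖b.repr x‖ = ‖x‖ := b.repr.norm_map x
  rw [EuclideanSpace.norm_eq] at h
  rw [← h, Real.sq_sqrt (Finset.sum_nonneg fun j _ => sq_nonneg _)]

lemma sandwich {A C : Matrix (Fin n) (Fin n) ℂ} (hA : A.IsHermitian) (hC : C.IsHermitian)
    (μ : ℝ) (hpsd : (C - A - (μ : ℂ) • 1).PosSemidef)
    (EA EC : Fin n → ℝ) (hEAa : Antitone EA) (hECa : Antitone EC)
    (σA : Equiv.Perm (Fin n)) (hEA : EA = hA.eigenvalues ∘ σA)
    (σC : Equiv.Perm (Fin n)) (hEC : EC = hC.eigenvalues ∘ σC)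
    (m : Fin n) : EA m + μ ≤ EC m := by
  set b1 := hA.eigenvectorBasis.reindex σA.symm with hb1
  set b2 := hC.eigenvectorBasis.reindex σC.symm with hb2
  have hb1a : ∀ j, b1 j = hA.eigenvectorBasis (σA j) := fun j => by
    rw [hb1, OrthonormalBasis.reindex_apply, Equiv.symm_symm]
  have hb2a : ∀ j, b2 j = hC.eigenvectorBasis (σC j) := fun j => by
    rw [hb2, OrthonormalBasis.reindex_apply, Equiv.symm_symm]
  have hAv : ∀ j, A *ᵥ (WithLp.equiv 2 _ (b1 j)) = EA j • (WithLp.equiv 2 _ (b1 j)) := by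
    intro j; rw [hb1a, hEA]; exact hA.mulVec_eigenvectorBasis (σA j)
  have hCw : ∀ j, C *ᵥ (WithLp.equiv 2 _ (b2 j)) = EC j • (WithLp.equiv 2 _ (b2 j)) := by
    intro j; rw [hb2a, hEC]; exact hC.mulVec_eigenvectorBasis (σC j)
  set V₁ := Submodule.span ℂ (⇑b1 '' Set.Iic m) with hV₁
  set W₁ := Submodule.span ℂ (⇑b2 '' Set.Ici m) with hW₁
  have h1 : Module.finrank ℂ V₁ = (m : ℕ) + 1 := by
    rw [hV₁, finrank_span_orthonormal _ b1.orthonormal]; simp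
  have h2 : Module.finrank ℂ W₁ = n - (m : ℕ) := by
    rw [hW₁, finrank_span_orthonormal _ b2.orthonormal]; simp
  have hsum := Submodule.finrank_sup_add_finrank_inf_eq V₁ W₁
  have hle : Module.finrank ℂ ↥(V₁ ⊔ W₁) ≤ n :=
    le_trans (Submodule.finrank_le _) (le_of_eq finrank_euclideanSpace_fin)
  have hm := m.2
  have hint : 0 < Module.finrank ℂ ↥(V₁ ⊓ W₁) := by omega
  obtain ⟨x, hx0⟩ := Module.finrank_pos_iff_exists_ne_zero.mp hint
  set y : EuclideanSpace ℂ (Fin n) := (x : EuclideanSpace ℂ (Fin n)) with hy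
  have hy0 : y ≠ 0 := fun h => hx0 (Subtype.ext h)
  have hyV : y ∈ V₁ := x.2.1
  have hyW : y ∈ W₁ := x.2.2
  -- Rayleigh bounds
  have hrA := rayleigh_formula A b1 EA hAv y
  have hrC := rayleigh_formula C b2 EC hCw y
  have hsum1 := sum_sq_repr b1 y
  have hsum2 := sum_sq_repr b2 y
  have hlow : EA m * ‖y‖^2 ≤ Complex.re (star (WithLp.equiv 2 _ y) ⬝ᵥ (A *ᵥ (WithLp.equiv 2 _ y))) := by
    rw [hrA, ← hsum1, Finset.mul_sum]
    refine Finset.sum_le_sum fun j _ => ?_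
    by_cases hcj : b1.repr y j = 0
    · simp [hcj]
    · have hjm : j ≤ m := by
        by_contra hj
        exact hcj (repr_eq_zero_of_mem_span b1 hyV (by simpa using hj))
      exact mul_le_mul_of_nonneg_right (hEAa hjm) (sq_nonneg _)
  have hupp : Complex.re (star (WithLp.equiv 2 _ y) ⬝ᵥ (C *ᵥ (WithLp.equiv 2 _ y))) ≤ EC m * ‖y‖^2 := by
    rw [hrC, ← hsum2, Finset.mul_sum]
    refine Finset.sum_le_sum fun j _ => ?_
    by_cases hcj : b2.repr y j = 0
    · simp [hcj]
    · have hjm : m ≤ j := by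
        by_contra hj
        exact hcj (repr_eq_zero_of_mem_span b2 hyW (by simpa using hj))
      exact mul_le_mul_of_nonneg_right (hECa hjm) (sq_nonneg _)
  have h0 := hpsd.re_dotProduct_nonneg (WithLp.equiv 2 _ y)
  have hexp : (star (WithLp.equiv 2 _ y) ⬝ᵥ ((C - A - (μ:ℂ) • 1) *ᵥ (WithLp.equiv 2 _ y)))
      = (star (WithLp.equiv 2 _ y) ⬝ᵥ (C *ᵥ (WithLp.equiv 2 _ y)))
        - (star (WithLp.equiv 2 _ y) ⬝ᵥ (A *ᵥ (WithLp.equiv 2 _ y)))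
        - (μ:ℂ) * (star (WithLp.equiv 2 _ y) ⬝ᵥ (WithLp.equiv 2 _ y)) := by
    rw [sub_mulVec, sub_mulVec, smul_mulVec, one_mulVec]
    rw [dotProduct_sub, dotProduct_sub, dotProduct_smul]
    rfl
  have hyy : (star (WithLp.equiv 2 _ y) ⬝ᵥ (WithLp.equiv 2 _ y)) = ((‖y‖^2 : ℝ) : ℂ) := by
    rw [dotProduct_comm, show WithLp.equiv 2 _ y ⬝ᵥ star (WithLp.equiv 2 _ y) = inner ℂ y y from rfl]
    exact_mod_cast inner_self_eq_norm_sq_to_K (𝕜 := ℂ) y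
  have hmid : Complex.re (star (WithLp.equiv 2 _ y) ⬝ᵥ (A *ᵥ (WithLp.equiv 2 _ y))) + μ * ‖y‖^2
      ≤ Complex.re (star (WithLp.equiv 2 _ y) ⬝ᵥ (C *ᵥ (WithLp.equiv 2 _ y))) := by
    have : RCLike.re (star (WithLp.equiv 2 _ y) ⬝ᵥ ((C - A - (μ:ℂ) • 1) *ᵥ (WithLp.equiv 2 _ y)))
        = Complex.re (star (WithLp.equiv 2 _ y) ⬝ᵥ ((C - A - (μ:ℂ) • 1) *ᵥ (WithLp.equiv 2 _ y))) := rfl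
    rw [this, hexp] at h0
    simp only [Complex.sub_re, hyy, ← Complex.ofReal_mul, Complex.ofReal_re] at h0
    linarith [h0]
  have hnorm : 0 < ‖y‖^2 := pow_pos (norm_pos_iff.mpr hy0) 2
  have := le_trans (by linarith [hlow] : (EA m + μ) * ‖y‖^2 ≤ _) (le_trans hmid hupp)
  exact le_of_mul_le_mul_right (by linarith [this]) hnorm

variable {n : ℕ}

lemma re_trace_eq {M : Matrix (Fin n) (Fin n) ℂ} (hM : M.IsHermitian) :
    Complex.re M.trace = ∑ j, hM.eigenvalues j := by
  conv_lhs => rw [hM.spectral_theorem]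
  rw [Unitary.conjStarAlgAut_apply]
  rw [trace_mul_cycle, Matrix.mem_unitaryGroup_iff'.mp hM.eigenvectorUnitary.2, one_mul,
    trace_diagonal]
  simp [Complex.re_sum]

lemma exists_antitone_enum (f : Fin n → ℝ) :
    ∃ σ : Equiv.Perm (Fin n), Antitone (f ∘ σ) := by
  refine ⟨(Fin.revPerm).trans (Tuple.sort f), fun a b hab => ?_⟩
  exact Tuple.monotone_sort f (by simpa [Fin.rev_le_rev] using hab)

variable {n : ℕ}

section UDU
variable {B : Matrix (Fin n) (Fin n) ℂ} (hB : B.IsHermitian)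

noncomputable def conjDiag (hB : B.IsHermitian) (g : Fin n → ℝ) : Matrix (Fin n) (Fin n) ℂ :=
  (hB.eigenvectorUnitary : Matrix (Fin n) (Fin n) ℂ) * diagonal (fun j => (g j : ℂ))
    * star (hB.eigenvectorUnitary : Matrix (Fin n) (Fin n) ℂ)

lemma conjDiag_isHermitian (g : Fin n → ℝ) : (conjDiag hB g).IsHermitian := by
  unfold conjDiag
  unfold Matrix.IsHermitian
  rw [star_eq_conjTranspose, conjTranspose_mul, conjTranspose_mul]
  rw [← star_eq_conjTranspose, ← star_eq_conjTranspose, star_star]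
  have hd : (diagonal (fun j => ((g j : ℝ) : ℂ)))ᴴ = diagonal (fun j => ((g j : ℝ) : ℂ)) := by
    have h2 : (star fun j => ((g j : ℝ) : ℂ)) = fun j => ((g j : ℝ) : ℂ) := by
      funext j
      simp [Complex.star_def, Complex.conj_ofReal]
    rw [diagonal_conjTranspose, h2]
  rw [hd, mul_assoc]

lemma conjDiag_posSemidef {g : Fin n → ℝ} (hg : ∀ j, 0 ≤ g j) : (conjDiag hB g).PosSemidef := by
  unfold conjDiag
  rw [star_eq_conjTranspose]
  exact (posSemidef_diagonal_iff.mpr fun i => by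
    simpa [Complex.zero_le_real] using hg i).mul_mul_conjTranspose_same _

lemma conjDiag_sub (g₁ g₂ : Fin n → ℝ) :
    conjDiag hB g₁ - conjDiag hB g₂ = conjDiag hB (g₁ - g₂) := by
  unfold conjDiag
  rw [← sub_mul, ← mul_sub, diagonal_sub]
  congr 2
  funext j
  simp

lemma conjDiag_eigen : conjDiag hB hB.eigenvalues = B := by
  unfold conjDiag
  conv_rhs => rw [hB.spectral_theorem]
  rfl

lemma conjDiag_const (μ : ℝ) : conjDiag hB (fun _ => μ) = (μ : ℂ) • 1 := by
  unfold conjDiag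
  rw [← smul_one_eq_diagonal, mul_smul_comm, mul_one, smul_mul_assoc,
    Matrix.mem_unitaryGroup_iff.mp hB.eigenvectorUnitary.2]

lemma conjDiag_trace (g : Fin n → ℝ) : (conjDiag hB g).trace = ∑ j, (g j : ℂ) := by
  unfold conjDiag
  rw [trace_mul_cycle, Matrix.mem_unitaryGroup_iff'.mp hB.eigenvectorUnitary.2, one_mul,
    trace_diagonal]

end UDU
/-- Lidskii inequality: if `A`, `B` are Hermitian `n × n` matrices and
`EA`, `EB`, `EAB` enumerate the eigenvalues of `A`, `B`, `A + B` in decreasing order,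
then for any strictly increasing choice of indices `i : Fin k → Fin n`,
`∑_j E_{i_j}(A+B) ≤ ∑_j E_{i_j}(A) + ∑_{j=1}^k E_j(B)`. -/
theorem stmt_4 {n k : ℕ} (hk : k ≤ n) (A B : Matrix (Fin n) (Fin n) ℂ)
    (hA : A.IsHermitian) (hB : B.IsHermitian)
    (EA EB EAB : Fin n → ℝ)
    (hEAa : Antitone EA) (hEBa : Antitone EB) (hEABa : Antitone EAB)
    (hEA : ∃ σ : Equiv.Perm (Fin n), EA = hA.eigenvalues ∘ σ)
    (hEB : ∃ σ : Equiv.Perm (Fin n), EB = hB.eigenvalues ∘ σ)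
    (hEAB : ∃ σ : Equiv.Perm (Fin n), EAB = (hA.add hB).eigenvalues ∘ σ)
    (i : Fin k → Fin n) (hi : StrictMono i) :
    ∑ j : Fin k, EAB (i j) ≤ ∑ j : Fin k, EA (i j) + ∑ j : Fin k, EB (Fin.castLE hk j) := by
  rcases Nat.eq_zero_or_pos k with hk0 | hkpos
  · subst hk0; simp
  obtain ⟨σA, hσA⟩ := hEA
  obtain ⟨σB, hσB⟩ := hEB
  obtain ⟨σAB, hσAB⟩ := hEAB
  set μ : ℝ := EB ⟨k-1, by omega⟩ with hμ
  set g : Fin n → ℝ := fun j => max (hB.eigenvalues j) μ with hg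
  set Bp := conjDiag hB g with hBpdef
  have hBp : Bp.IsHermitian := conjDiag_isHermitian hB g
  have hABp : (A + Bp).IsHermitian := hA.add hBp
  obtain ⟨σ', hσ'a⟩ := exists_antitone_enum hABp.eigenvalues
  set E' : Fin n → ℝ := hABp.eigenvalues ∘ σ' with hE'
  have hpsd1 : ((A + Bp) - (A + B) - ((0:ℝ):ℂ) • 1).PosSemidef := by
    have h1 : ((A + Bp) - (A + B) - ((0:ℝ):ℂ) • 1) = conjDiag hB (g - hB.eigenvalues) := by
      rw [← conjDiag_sub, conjDiag_eigen]
      push_cast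
      rw [zero_smul, sub_zero, hBpdef]
      abel
    rw [h1]
    exact conjDiag_posSemidef hB (fun j => by simp [hg, sub_nonneg])
  have step1 : ∀ m, EAB m ≤ E' m := by
    intro m
    have := sandwich (hA.add hB) hABp 0 hpsd1 EAB E' hEABa hσ'a σAB hσAB σ' rfl m
    linarith
  have hpsd2 : ((A + Bp) - A - ((μ:ℝ):ℂ) • 1).PosSemidef := by
    have h1 : (A + Bp) - A - ((μ:ℝ):ℂ) • 1 = conjDiag hB (g - fun _ => μ) := by
      rw [← conjDiag_sub, conjDiag_const, hBpdef]
      abel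
    rw [h1]
    exact conjDiag_posSemidef hB (fun j => by simp [hg, sub_nonneg])
  have step2 : ∀ m, EA m + μ ≤ E' m := fun m =>
    sandwich hA hABp μ hpsd2 EA E' hEAa hσ'a σA hσA σ' rfl m
  -- trace computations
  have htA : ∑ m, EA m = Complex.re A.trace := by
    rw [hσA, re_trace_eq hA]; exact Equiv.sum_comp σA _
  have htE' : ∑ m, E' m = Complex.re (A + Bp).trace := by
    rw [hE', re_trace_eq hABp]; exact Equiv.sum_comp σ' _
  have htBp : Complex.re Bp.trace = ∑ j, g j := by
    rw [hBpdef, conjDiag_trace]; rw [Complex.re_sum]; simp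
  have hgsum : ∑ j, g j = ∑ j, max (EB j) μ := by
    rw [hσB, hg]
    exact (Equiv.sum_comp σB (fun j => max (hB.eigenvalues j) μ)).symm
  have htsum : ∑ m, (E' m - EA m) = ∑ j, max (EB j) μ := by
    rw [Finset.sum_sub_distrib, htA, htE', trace_add, Complex.add_re, ← hgsum]
    linarith [htBp]
  -- index bookkeeping
  classical
  have himg : Finset.image (Fin.castLE hk) Finset.univ
      = Finset.univ.filter (fun m : Fin n => (m:ℕ) < k) := by
    ext m
    simp only [Finset.mem_image, Finset.mem_filter, Finset.mem_univ, true_and]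
    constructor
    · rintro ⟨j, _, rfl⟩; exact j.2
    · intro hm; exact ⟨⟨m, hm⟩, rfl⟩
  have hcardfil : (Finset.univ.filter (fun m : Fin n => (m:ℕ) < k)).card = k := by
    rw [← himg, Finset.card_image_of_injective _ (Fin.castLE_injective hk)]
    simp
  have hEBsplit : ∑ j, max (EB j) μ
      = (∑ j : Fin k, EB (Fin.castLE hk j)) + ((n - k : ℕ) : ℝ) * μ := by
    rw [← Finset.sum_filter_add_sum_filter_not Finset.univ
      (fun m : Fin n => (m:ℕ) < k) (fun m => max (EB m) μ)]
    congr 1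
    · rw [Finset.sum_congr rfl (fun m hm => ?_), ← himg,
        Finset.sum_image (fun a _ b _ h => Fin.castLE_injective hk h)]
      have hm' : (m:ℕ) < k := (Finset.mem_filter.mp hm).2
      have : μ ≤ EB m := hEBa (by simp [Fin.le_def]; omega)
      exact max_eq_left this
    · rw [Finset.sum_congr rfl (fun m hm => ?_), Finset.sum_const, nsmul_eq_mul]
      · congr 2
        rw [Finset.filter_not, Finset.card_sdiff_of_subset (Finset.filter_subset _ _), hcardfil]
        simp
      have hm' : ¬ (m:ℕ) < k := by simpa using (Finset.mem_filter.mp hm).2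
      have : EB m ≤ μ := hEBa (by simp [Fin.le_def]; omega)
      exact max_eq_right this
  set S := Finset.image i Finset.univ with hS
  have hcardS : S.card = k := by
    rw [hS, Finset.card_image_of_injective _ hi.injective]; simp
  have h1 : ∑ j : Fin k, (E' (i j) - EA (i j)) = ∑ m ∈ S, (E' m - EA m) := by
    rw [hS, Finset.sum_image (fun a _ b _ h => hi.injective h)]
  have h2 : ∑ m ∈ S, (E' m - EA m) + ∑ m ∈ Sᶜ, (E' m - EA m) = ∑ m, (E' m - EA m) :=
    Finset.sum_add_sum_compl S _
  have h3 : ((n - k : ℕ) : ℝ) * μ ≤ ∑ m ∈ Sᶜ, (E' m - EA m) := by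
    have hc : Sᶜ.card = n - k := by rw [Finset.card_compl, hcardS]; simp
    calc ((n - k : ℕ) : ℝ) * μ = Sᶜ.card • μ := by rw [hc, nsmul_eq_mul]
      _ ≤ ∑ m ∈ Sᶜ, (E' m - EA m) :=
          Finset.card_nsmul_le_sum _ _ _ (fun m _ => by linarith [step2 m])
  have h4 : ∑ j : Fin k, (E' (i j) - EA (i j)) ≤ ∑ j : Fin k, EB (Fin.castLE hk j) := by
    rw [h1]
    have := htsum
    rw [hEBsplit] at this
    linarith [h2, h3]
  have h5 : ∑ j : Fin k, EAB (i j) ≤ ∑ j : Fin k, E' (i j) :=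
    Finset.sum_le_sum (fun j _ => step1 (i j))
  have h6 : ∑ j : Fin k, (E' (i j) - EA (i j))
      = ∑ j : Fin k, E' (i j) - ∑ j : Fin k, EA (i j) := Finset.sum_sub_distrib _ _
  linarith [h4, h5, h6]
end

section
/- Let A, B be n×n Hermitian matrices such that A - B has rank at most 2 with eigenvalues -r, 0, ..., 0, r for some r ≥ 0 (i.e. A - B has one eigenvalue r, one eigenvalue -r, and all others zero). Let λ_1 ≥ ··· ≥ λ_n be the eigenvalues of A and μ_1 ≥ ··· ≥ μ_n the eigenvalues of B. Then the alternating sum ∑_{k=1}^{n} (-1)^{n-k}(λ_k - μ_k) is at most 4r. -/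
open Matrix BigOperators Finset ComplexOrder

variable {n : ℕ}

local notation "⟪" x ", " y "⟫" => @inner ℂ _ _ x y

lemma aux_Tvi {B : Matrix (Fin n) (Fin n) ℂ} (hB : B.IsHermitian) (i : Fin n) :
    Matrix.toEuclideanLin B (hB.eigenvectorBasis i) =
      (hB.eigenvalues i : ℂ) • (hB.eigenvectorBasis i : EuclideanSpace ℂ (Fin n)) := by
  apply (WithLp.equiv 2 (Fin n → ℂ)).injective
  simp only [WithLp.equiv_apply, ofLp_toEuclideanLin_apply]
  have h := hB.mulVec_eigenvectorBasis i
  simpa [Complex.real_smul] using h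

lemma aux_norm_sq {b : OrthonormalBasis (Fin n) ℂ (EuclideanSpace ℂ (Fin n))}
    (x : EuclideanSpace ℂ (Fin n)) :
    ‖x‖ ^ 2 = ∑ i, ‖⟪(b i : EuclideanSpace ℂ (Fin n)), x⟫‖ ^ 2 := by
  have h1 : ‖x‖ = ‖b.repr x‖ := (b.repr.norm_map x).symm
  rw [h1, EuclideanSpace.norm_eq]
  rw [Real.sq_sqrt (by positivity)]
  congr 1; ext i
  rw [b.repr_apply_apply]

lemma aux_quad_expand {B : Matrix (Fin n) (Fin n) ℂ} (hB : B.IsHermitian)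
    (x : EuclideanSpace ℂ (Fin n)) :
    RCLike.re ⟪x, Matrix.toEuclideanLin B x⟫ =
      ∑ i, hB.eigenvalues i * ‖⟪(hB.eigenvectorBasis i : EuclideanSpace ℂ (Fin n)), x⟫‖ ^ 2 := by
  set b := hB.eigenvectorBasis
  set T := Matrix.toEuclideanLin B
  have hsymm : (Matrix.toEuclideanLin B).IsSymmetric :=
    (Matrix.isHermitian_iff_isSymmetric.mp hB)
  have h1 : ⟪x, T x⟫ = ⟪b.repr x, b.repr (T x)⟫ :=
    (b.repr.inner_map_map x (T x)).symm
  have h2 : ∀ i, b.repr (T x) i = (hB.eigenvalues i : ℂ) * b.repr x i := by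
    intro i
    rw [b.repr_apply_apply, ← hsymm (b i) x, aux_Tvi hB i, inner_smul_left,
      b.repr_apply_apply]
    simp [Complex.conj_ofReal]
    exact Or.inl rfl
  rw [h1, PiLp.inner_apply]
  rw [map_sum]
  congr 1; ext i
  rw [h2 i, RCLike.inner_apply', b.repr_apply_apply]
  have : (starRingEnd ℂ) ⟪b i, x⟫ * ((hB.eigenvalues i : ℂ) * ⟪b i, x⟫)
      = (hB.eigenvalues i : ℂ) * ((starRingEnd ℂ) ⟪b i, x⟫ * ⟪b i, x⟫) := by ring
  rw [this, RCLike.conj_mul]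
  simp [RCLike.mul_re, ← Complex.ofReal_pow]

lemma aux_vanish {b : OrthonormalBasis (Fin n) ℂ (EuclideanSpace ℂ (Fin n))}
    {ι : Type*} (g : ι → Fin n) (x : EuclideanSpace ℂ (Fin n))
    (hx : x ∈ Submodule.span ℂ (Set.range fun j => (b (g j) : EuclideanSpace ℂ (Fin n))))
    (i : Fin n) (hi : i ∉ Set.range g) : ⟪(b i : EuclideanSpace ℂ (Fin n)), x⟫ = 0 := by
  induction hx using Submodule.span_induction with
  | mem y hy =>
      obtain ⟨j, rfl⟩ := hy
      exact b.orthonormal.2 (fun h => hi ⟨j, h.symm⟩)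
  | zero => simp
  | add y z _ _ hy hz => rw [inner_add_right, hy, hz, add_zero]
  | smul c y _ hy => rw [inner_smul_right, hy, mul_zero]

lemma aux_quad_lower {B : Matrix (Fin n) (Fin n) ℂ} (hB : B.IsHermitian)
    {ι : Type*} (g : ι → Fin n) (c : ℝ) (hc : ∀ j, c ≤ hB.eigenvalues (g j))
    (x : EuclideanSpace ℂ (Fin n))
    (hx : x ∈ Submodule.span ℂ
      (Set.range fun j => (hB.eigenvectorBasis (g j) : EuclideanSpace ℂ (Fin n)))) :
    c * ‖x‖ ^ 2 ≤ RCLike.re ⟪x, Matrix.toEuclideanLin B x⟫ := by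
  rw [aux_quad_expand hB, aux_norm_sq (b := hB.eigenvectorBasis), Finset.mul_sum]
  apply Finset.sum_le_sum
  intro i _
  by_cases hi : i ∈ Set.range g
  · obtain ⟨j, rfl⟩ := hi
    exact mul_le_mul_of_nonneg_right (hc j) (by positivity)
  · rw [aux_vanish g x hx i hi]; simp

lemma aux_quad_upper {B : Matrix (Fin n) (Fin n) ℂ} (hB : B.IsHermitian)
    {ι : Type*} (g : ι → Fin n) (c : ℝ) (hc : ∀ j, hB.eigenvalues (g j) ≤ c)
    (x : EuclideanSpace ℂ (Fin n))
    (hx : x ∈ Submodule.span ℂ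
      (Set.range fun j => (hB.eigenvectorBasis (g j) : EuclideanSpace ℂ (Fin n)))) :
    RCLike.re ⟪x, Matrix.toEuclideanLin B x⟫ ≤ c * ‖x‖ ^ 2 := by
  rw [aux_quad_expand hB, aux_norm_sq (b := hB.eigenvectorBasis), Finset.mul_sum]
  apply Finset.sum_le_sum
  intro i _
  by_cases hi : i ∈ Set.range g
  · obtain ⟨j, rfl⟩ := hi
    exact mul_le_mul_of_nonneg_right (hc j) (by positivity)
  · rw [aux_vanish g x hx i hi]; simp

lemma aux_span_finrank {ι : Type*} [Fintype ι] {f : ι → EuclideanSpace ℂ (Fin n)}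
    (hon : Orthonormal ℂ f) :
    Module.finrank ℂ (Submodule.span ℂ (Set.range f)) = Fintype.card ι :=
  finrank_span_eq_card hon.linearIndependent

lemma aux_weyl {B C : Matrix (Fin n) (Fin n) ℂ} (hB : B.IsHermitian) (hC : C.IsHermitian)
    (hPSD : (C - B).PosSemidef) (mu nu : Fin n → ℝ) (hmu : Antitone mu) (hnu : Antitone nu)
    (σ τ : Equiv.Perm (Fin n)) (hmuE : mu = hB.eigenvalues ∘ σ)
    (hnuE : nu = hC.eigenvalues ∘ τ) (k : Fin n) : mu k ≤ nu k := by
  classical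
  set U := Submodule.span ℂ
    (Set.range fun j : Set.Iic k => (hB.eigenvectorBasis (σ j) : EuclideanSpace ℂ (Fin n)))
    with hUdef
  set W := Submodule.span ℂ
    (Set.range fun j : Set.Ici k => (hC.eigenvectorBasis (τ j) : EuclideanSpace ℂ (Fin n)))
    with hWdef
  have honU : Orthonormal ℂ
      (fun j : Set.Iic k => (hB.eigenvectorBasis (σ j) : EuclideanSpace ℂ (Fin n))) :=
    hB.eigenvectorBasis.orthonormal.comp (fun j : Set.Iic k => σ j)
      (fun a b h => Subtype.ext (σ.injective h))
  have honW : Orthonormal ℂ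
      (fun j : Set.Ici k => (hC.eigenvectorBasis (τ j) : EuclideanSpace ℂ (Fin n))) :=
    hC.eigenvectorBasis.orthonormal.comp (fun j : Set.Ici k => τ j)
      (fun a b h => Subtype.ext (τ.injective h))
  have hU : Module.finrank ℂ U = (k : ℕ) + 1 := by
    rw [hUdef, aux_span_finrank honU, Fintype.card_Iic, Fin.card_Iic]
  have hW : Module.finrank ℂ W = n - (k : ℕ) := by
    rw [hWdef, aux_span_finrank honW, Fintype.card_Ici, Fin.card_Ici]
  have hsum := Submodule.finrank_sup_add_finrank_inf_eq U W
  have hle : Module.finrank ℂ ↥(U ⊔ W) ≤ n := by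
    have := Submodule.finrank_le (U ⊔ W)
    rwa [finrank_euclideanSpace_fin] at this
  have hk : (k : ℕ) < n := k.isLt
  have hpos : 0 < Module.finrank ℂ ↥(U ⊓ W) := by omega
  have hne : U ⊓ W ≠ ⊥ := by
    intro h
    rw [h, finrank_bot] at hpos
    omega
  obtain ⟨x, hxUW, hx0⟩ := Submodule.exists_mem_ne_zero_of_ne_bot hne
  have h1 : mu k * ‖x‖ ^ 2 ≤ RCLike.re ⟪x, Matrix.toEuclideanLin B x⟫ := by
    apply aux_quad_lower hB (fun j : Set.Iic k => σ j) (mu k) _ x hxUW.1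
    intro j
    have : mu (j : Fin n) = hB.eigenvalues (σ j) := by rw [hmuE]; rfl
    rw [← this]
    exact hmu j.2
  have h2 : RCLike.re ⟪x, Matrix.toEuclideanLin C x⟫ ≤ nu k * ‖x‖ ^ 2 := by
    apply aux_quad_upper hC (fun j : Set.Ici k => τ j) (nu k) _ x hxUW.2
    intro j
    have : nu (j : Fin n) = hC.eigenvalues (τ j) := by rw [hnuE]; rfl
    rw [← this]
    exact hnu j.2
  have h3 : 0 ≤ RCLike.re ⟪x, Matrix.toEuclideanLin (C - B) x⟫ := by
    rw [EuclideanSpace.inner_eq_star_dotProduct]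
    have h := hPSD.re_dotProduct_nonneg (WithLp.equiv 2 (Fin n → ℂ) x)
    rw [ofLp_toEuclideanLin_apply, dotProduct_comm]
    simpa using h
  have h4 : RCLike.re ⟪x, Matrix.toEuclideanLin (C - B) x⟫ =
      RCLike.re ⟪x, Matrix.toEuclideanLin C x⟫ - RCLike.re ⟪x, Matrix.toEuclideanLin B x⟫ := by
    rw [map_sub, LinearMap.sub_apply, inner_sub_right, map_sub]
  have hx2 : (0:ℝ) < ‖x‖ ^ 2 := by
    have : (0:ℝ) < ‖x‖ := norm_pos_iff.mpr hx0
    positivity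
  nlinarith [h1, h2, h3, h4, hx2]

lemma aux_trace {B : Matrix (Fin n) (Fin n) ℂ} (hB : B.IsHermitian) :
    B.trace = ∑ i, (hB.eigenvalues i : ℂ) := by
  conv_lhs => rw [hB.spectral_theorem]
  rw [Unitary.conjStarAlgAut_apply]
  rw [Matrix.trace_mul_cycle]
  rw [show star (hB.eigenvectorUnitary : Matrix (Fin n) (Fin n) ℂ) *
      (hB.eigenvectorUnitary : Matrix (Fin n) (Fin n) ℂ) = 1 from
    Matrix.mem_unitaryGroup_iff'.mp hB.eigenvectorUnitary.2]
  rw [one_mul, Matrix.trace_diagonal]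
  rfl

/-- functional-calculus style part of a Hermitian matrix -/
noncomputable def auxPart {n : ℕ} {D : Matrix (Fin n) (Fin n) ℂ} (hD : D.IsHermitian)
    (f : ℝ → ℝ) : Matrix (Fin n) (Fin n) ℂ :=
  (hD.eigenvectorUnitary : Matrix (Fin n) (Fin n) ℂ) *
    Matrix.diagonal (fun i => ((f (hD.eigenvalues i) : ℂ))) *
    star (hD.eigenvectorUnitary : Matrix (Fin n) (Fin n) ℂ)

lemma auxPart_posSemidef {D : Matrix (Fin n) (Fin n) ℂ} (hD : D.IsHermitian)
    (f : ℝ → ℝ) (hf : ∀ a, 0 ≤ f a) : (auxPart hD f).PosSemidef := by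
  unfold auxPart
  rw [Matrix.star_eq_conjTranspose]
  apply Matrix.PosSemidef.mul_mul_conjTranspose_same
  apply Matrix.PosSemidef.diagonal
  intro i
  have h0 : (0:ℂ) ≤ ((f (hD.eigenvalues i) : ℝ) : ℂ) := by exact_mod_cast hf (hD.eigenvalues i)
  exact h0

lemma auxPart_trace {D : Matrix (Fin n) (Fin n) ℂ} (hD : D.IsHermitian) (f : ℝ → ℝ) :
    (auxPart hD f).trace = ((∑ i, f (hD.eigenvalues i) : ℝ) : ℂ) := by
  unfold auxPart
  rw [Matrix.trace_mul_cycle]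
  rw [show star (hD.eigenvectorUnitary : Matrix (Fin n) (Fin n) ℂ) *
      (hD.eigenvectorUnitary : Matrix (Fin n) (Fin n) ℂ) = 1 from
    Matrix.mem_unitaryGroup_iff'.mp hD.eigenvectorUnitary.2]
  rw [one_mul, Matrix.trace_diagonal]
  push_cast
  rfl

lemma auxPart_sub {D : Matrix (Fin n) (Fin n) ℂ} (hD : D.IsHermitian) (f g : ℝ → ℝ) :
    auxPart hD f - auxPart hD g = auxPart hD (f - g) := by
  unfold auxPart
  rw [← Matrix.sub_mul, ← Matrix.mul_sub, Matrix.diagonal_sub]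
  have : (fun i => ((f (hD.eigenvalues i) : ℂ)) - ((g (hD.eigenvalues i)) : ℂ)) =
      fun i => (((f - g) (hD.eigenvalues i) : ℝ) : ℂ) := by
    funext i
    simp [Pi.sub_apply]
  rw [this]

lemma auxPart_id {D : Matrix (Fin n) (Fin n) ℂ} (hD : D.IsHermitian) :
    auxPart hD (fun a => a) = D := by
  unfold auxPart
  conv_rhs => rw [hD.spectral_theorem]
  rfl


/-- If `A`, `B` are Hermitian `n × n` matrices such that `A - B` has eigenvalues
`r, 0, …, 0, -r` with `r ≥ 0`, and `λ_1 ≥ ⋯ ≥ λ_n`, `μ_1 ≥ ⋯ ≥ μ_n` are the eigenvalues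
of `A` and `B` respectively, then `∑_{k=1}^n (-1)^{n-k} (λ_k - μ_k) ≤ 4 r`. -/
theorem stmt_5 {n : ℕ} (hn : 2 ≤ n) (r : ℝ) (hr : 0 ≤ r)
    (A B : Matrix (Fin n) (Fin n) ℂ)
    (hA : A.IsHermitian) (hB : B.IsHermitian) (hD : (A - B).IsHermitian)
    (lam mu ED : Fin n → ℝ)
    (hlam : Antitone lam) (hmu : Antitone mu) (hED : Antitone ED)
    (hlamE : ∃ σ : Equiv.Perm (Fin n), lam = hA.eigenvalues ∘ σ)
    (hmuE : ∃ σ : Equiv.Perm (Fin n), mu = hB.eigenvalues ∘ σ)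
    (hEDE : ∃ σ : Equiv.Perm (Fin n), ED = hD.eigenvalues ∘ σ)
    (hED0 : ED ⟨0, by omega⟩ = r) (hEDn : ED ⟨n - 1, by omega⟩ = -r)
    (hEDmid : ∀ j : Fin n, 0 < (j : ℕ) → (j : ℕ) < n - 1 → ED j = 0) :
    ∑ j : Fin n, (-1 : ℝ) ^ (n - 1 - (j : ℕ)) * (lam j - mu j) ≤ 4 * r := by
  obtain ⟨σA, hσA⟩ := hlamE
  obtain ⟨σB, hσB⟩ := hmuE
  obtain ⟨σD, hσD⟩ := hEDE
  set P := auxPart hD (fun a => max a 0) with hPdef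
  set N := auxPart hD (fun a => max (-a) 0) with hNdef
  have hfun : ((fun a : ℝ => max a 0) - fun a : ℝ => max (-a) 0) = (fun a : ℝ => a) := by
    funext a
    simp only [Pi.sub_apply]
    rcases le_total 0 a with h | h
    · rw [max_eq_left h, max_eq_right (by linarith)]; ring
    · rw [max_eq_right h, max_eq_left (by linarith)]; ring
  have hPN : P - N = A - B := by
    rw [hPdef, hNdef, auxPart_sub, hfun, auxPart_id]
  have hP : P.PosSemidef := auxPart_posSemidef hD _ (fun a => le_max_right a 0)
  have hN : N.PosSemidef := auxPart_posSemidef hD _ (fun a => le_max_right (-a) 0)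
  -- eigenvalue sums of D
  have hmarg : ∀ f : ℝ → ℝ, ∑ i, f (hD.eigenvalues i) = ∑ j, f (ED j) := by
    intro f
    rw [← Equiv.sum_comp σD (fun i => f (hD.eigenvalues i))]
    congr 1; funext j; rw [hσD]; rfl
  have hzero : (⟨0, by omega⟩ : Fin n) ≠ ⟨n - 1, by omega⟩ := by
    intro h
    have := Fin.mk.injEq 0 (by omega : 0 < n) (n-1) (by omega) ▸ h
    simp [Fin.ext_iff] at h
    omega
  have hEDcases : ∀ j : Fin n, j ≠ ⟨0, by omega⟩ → j = ⟨n - 1, by omega⟩ ∨ ED j = 0 := by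
    intro j hj
    by_cases h1 : (j : ℕ) = n - 1
    · left; exact Fin.ext h1
    · right
      apply hEDmid
      · have : (j : ℕ) ≠ 0 := fun h => hj (Fin.ext h)
        omega
      · have := j.isLt; omega
  have hsumPos : ∑ j, max (ED j) 0 = r := by
    rw [Finset.sum_eq_single (⟨0, by omega⟩ : Fin n)]
    · rw [hED0]; exact max_eq_left hr
    · intro b _ hb
      rcases hEDcases b hb with h | h
      · rw [h, hEDn]; exact max_eq_right (by linarith)
      · rw [h]; exact max_self 0
    · intro h; exact absurd (Finset.mem_univ _) h
  have hsumNeg : ∑ j, max (-ED j) 0 = r := by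
    rw [Finset.sum_eq_single (⟨n - 1, by omega⟩ : Fin n)]
    · rw [hEDn]; rw [neg_neg]; exact max_eq_left hr
    · intro b _ hb
      by_cases hb0 : b = ⟨0, by omega⟩
      · rw [hb0, hED0]; exact max_eq_right (by linarith)
      · rcases hEDcases b hb0 with h | h
        · exact absurd h hb
        · rw [h, neg_zero]; exact max_self 0
    · intro h; exact absurd (Finset.mem_univ _) h
  have trP : P.trace = (r : ℂ) := by
    rw [hPdef, auxPart_trace, hmarg (fun a => max a 0), hsumPos]
  have trN : N.trace = (r : ℂ) := by
    rw [hNdef, auxPart_trace, hmarg (fun a => max (-a) 0), hsumNeg]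
  -- the matrix C = B + P
  set C := B + P with hCdef
  have hC : C.IsHermitian := hB.add hP.1
  set g := hC.eigenvalues with hgdef
  set σC : Equiv.Perm (Fin n) := Fin.revPerm.trans (Tuple.sort g) with hσC
  set nu : Fin n → ℝ := g ∘ σC with hnu_def
  have hnu : Antitone nu := by
    intro a b hab
    have h1 : Fin.rev b ≤ Fin.rev a := Fin.rev_le_rev.mpr hab
    exact Tuple.monotone_sort g h1
  have hCB : C - B = P := by rw [hCdef]; abel
  have hCA : C - A = N := by
    rw [hCdef, show N = P - (A - B) from by rw [← hPN]; abel]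
    abel
  have hlamnu : ∀ k, lam k ≤ nu k := fun k =>
    aux_weyl hA hC (hCA ▸ hN) lam nu hlam hnu σA σC hσA rfl k
  have hmunu : ∀ k, mu k ≤ nu k := fun k =>
    aux_weyl hB hC (hCB ▸ hP) mu nu hmu hnu σB σC hσB rfl k
  -- trace identities
  have tA : A.trace = ((∑ j, lam j : ℝ) : ℂ) := by
    rw [aux_trace hA]
    rw [show ∑ j, lam j = ∑ i, hA.eigenvalues i from by
      rw [hσA]; exact Equiv.sum_comp σA hA.eigenvalues]
    push_cast; rfl
  have tB : B.trace = ((∑ j, mu j : ℝ) : ℂ) := by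
    rw [aux_trace hB]
    rw [show ∑ j, mu j = ∑ i, hB.eigenvalues i from by
      rw [hσB]; exact Equiv.sum_comp σB hB.eigenvalues]
    push_cast; rfl
  have tC : C.trace = ((∑ j, nu j : ℝ) : ℂ) := by
    rw [aux_trace hC]
    rw [show ∑ j, nu j = ∑ i, hC.eigenvalues i from by
      rw [← Equiv.sum_comp σC hC.eigenvalues]; rfl]
    push_cast; rfl
  have hsum1 : ∑ j, nu j = ∑ j, mu j + r := by
    have h1 : C.trace = B.trace + P.trace := by rw [hCdef, Matrix.trace_add]
    rw [tC, tB, trP] at h1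
    exact_mod_cast h1
  have hsum2 : ∑ j, nu j = ∑ j, lam j + r := by
    have hCAN : C = A + N := by rw [← hCA]; abel
    have h1 : C.trace = A.trace + N.trace := by rw [hCAN, Matrix.trace_add]
    rw [tC, tA, trN] at h1
    exact_mod_cast h1
  -- final bound
  have key : ∀ j : Fin n, (-1 : ℝ) ^ (n - 1 - (j : ℕ)) * (lam j - mu j) ≤
      (nu j - lam j) + (nu j - mu j) := by
    intro j
    have h1 := hlamnu j
    have h2 := hmunu j
    rcases Nat.even_or_odd (n - 1 - (j : ℕ)) with h | h
    · rw [h.neg_one_pow]; linarith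
    · rw [h.neg_one_pow]; linarith
  calc ∑ j : Fin n, (-1 : ℝ) ^ (n - 1 - (j : ℕ)) * (lam j - mu j)
      ≤ ∑ j : Fin n, ((nu j - lam j) + (nu j - mu j)) :=
        Finset.sum_le_sum (fun j _ => key j)
    _ = (∑ j, nu j - ∑ j, lam j) + (∑ j, nu j - ∑ j, mu j) := by
        rw [Finset.sum_add_distrib, Finset.sum_sub_distrib, Finset.sum_sub_distrib]
    _ = r + r := by linarith [hsum1, hsum2]
    _ ≤ 4 * r := by linarith
end

section
/- Let S ⊂ ℝ and suppose S has a sequence of covers S ⊂ S_n where each S_n is a union of q_n intervals, q_n → ∞, and |S_n| < C/q_n^β for positive constants C and β. Then the Hausdorff dimension of S is at most 1/(1+β). -/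
open MeasureTheory Set
open scoped ENNReal NNReal

-- helper: a point lies in at most two cells
lemma mem_cell_floor_or_ceil {δ : ℝ} (hδ : 0 < δ) {k : ℤ} {y : ℝ}
    (hy : y ∈ Set.Icc (k * δ) (k * δ + δ)) :
    k = ⌊y / δ⌋ ∨ k = ⌈y / δ⌉ - 1 := by
  obtain ⟨h1, h2⟩ := hy
  have hk1 : (k : ℝ) ≤ y / δ := (le_div_iff₀ hδ).2 (by linarith)
  have hk2 : y / δ ≤ (k : ℝ) + 1 := by
    rw [div_le_iff₀ hδ]; push_cast; linarith
  have hfl : k ≤ ⌊y / δ⌋ := Int.le_floor.2 hk1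
  have hcl : ⌈y / δ⌉ ≤ k + 1 := Int.ceil_le.2 (by exact_mod_cast hk2)
  rcases eq_or_lt_of_le hfl with h | h
  · exact Or.inl h
  · right
    have := Int.floor_le_ceil (y / δ)
    omega

lemma cell_mem_of_mem {δ : ℝ} (hδ : 0 < δ) (x : ℝ) :
    x ∈ Set.Icc ((⌊x / δ⌋ : ℤ) * δ) ((⌊x / δ⌋ : ℤ) * δ + δ) := by
  constructor
  · rw [← le_div_iff₀ hδ]; exact Int.floor_le _
  · have := (Int.lt_floor_add_one (x / δ)).le
    rw [div_le_iff₀ hδ] at this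
    push_cast at this ⊢; linarith

lemma grid_lemma (m : ℕ) (δ : ℝ) (hδ : 0 < δ) {T : Set ℝ} (a b : Fin m → ℝ)
    (hT : T = ⋃ i, Set.Icc (a i) (b i))
    (hvol : volume T < ENNReal.ofReal (m * δ)) :
    ∃ K : Finset ℤ, K.card ≤ 5 * m ∧ T ⊆ ⋃ k ∈ K, Set.Icc (k * δ) (k * δ + δ) := by
  classical
  set A : Set ℤ := {k | Set.Icc ((k : ℝ) * δ) (k * δ + δ) ⊆ T} with hA
  -- disjointness of Ico cells
  have hdisj : Pairwise (Function.onFun Disjoint fun k : ℤ => Set.Ico ((k : ℝ) * δ) (k * δ + δ)) := by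
    intro j k hjk
    simp only [Function.onFun, Set.disjoint_left]
    rintro x ⟨hx1, hx2⟩ ⟨hx3, hx4⟩
    apply hjk
    have e1 : j = ⌊x / δ⌋ := by
      symm; rw [Int.floor_eq_iff]
      constructor
      · exact (le_div_iff₀ hδ).2 (by linarith)
      · rw [div_lt_iff₀ hδ]; push_cast; linarith
    have e2 : k = ⌊x / δ⌋ := by
      symm; rw [Int.floor_eq_iff]
      constructor
      · exact (le_div_iff₀ hδ).2 (by linarith)
      · rw [div_lt_iff₀ hδ]; push_cast; linarith
    rw [e1, e2]
  -- any finset inside A has card < m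
  have hcard : ∀ F : Finset ℤ, ↑F ⊆ A → F.card < m := by
    intro F hF
    by_contra hge
    push_neg at hge
    have hsub : (⋃ k ∈ F, Set.Ico ((k : ℝ) * δ) (k * δ + δ)) ⊆ T := by
      intro x hx
      simp only [Set.mem_iUnion] at hx
      obtain ⟨k, hk, hx⟩ := hx
      exact hF hk (Set.Ico_subset_Icc_self hx)
    have hmeq : volume (⋃ k ∈ F, Set.Ico ((k : ℝ) * δ) (k * δ + δ))
        = F.card * ENNReal.ofReal δ := by
      rw [measure_biUnion_finset (hdisj.set_pairwise _) (fun i _ => measurableSet_Ico)]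
      simp [Real.volume_Ico, Finset.sum_const, nsmul_eq_mul]
    have h1 : (F.card : ℝ≥0∞) * ENNReal.ofReal δ < ENNReal.ofReal (m * δ) :=
      hmeq ▸ lt_of_le_of_lt (measure_mono hsub) hvol
    have h2 : (m : ℝ≥0∞) * ENNReal.ofReal δ ≤ (F.card : ℝ≥0∞) * ENNReal.ofReal δ :=
      mul_le_mul_left (by exact_mod_cast hge) _
    rw [ENNReal.ofReal_mul (by positivity), ENNReal.ofReal_natCast] at h1
    exact absurd h1 (not_lt.2 h2)
  have hAfin : A.Finite := by
    by_contra hinf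
    obtain ⟨F, hFA, hFc⟩ := Set.Infinite.exists_subset_card_eq hinf m
    exact absurd (hcard F hFA) (by omega)
  set B : Finset ℤ := Finset.univ.biUnion
    (fun i : Fin m => {⌊a i / δ⌋, ⌈a i / δ⌉ - 1, ⌊b i / δ⌋, ⌈b i / δ⌉ - 1}) with hB
  refine ⟨hAfin.toFinset ∪ B, ?_, ?_⟩
  · have h1 : hAfin.toFinset.card ≤ m := by
      have := hcard hAfin.toFinset (by simp)
      omega
    have h2 : B.card ≤ 4 * m := by
      apply le_trans (Finset.card_biUnion_le)
      apply le_trans (Finset.sum_le_card_nsmul _ _ 4 ?_)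
      · simp [mul_comm]
      · intro i _
        apply le_trans (Finset.card_insert_le _ _)
        apply Nat.succ_le_succ
        apply le_trans (Finset.card_insert_le _ _)
        apply Nat.succ_le_succ
        exact le_trans (Finset.card_insert_le _ _) (Nat.succ_le_succ (by simp))
    calc (hAfin.toFinset ∪ B).card ≤ hAfin.toFinset.card + B.card := Finset.card_union_le _ _
      _ ≤ 5 * m := by omega
  · intro x hx
    set k : ℤ := ⌊x / δ⌋ with hk
    have hxc : x ∈ Set.Icc ((k : ℝ) * δ) (k * δ + δ) := cell_mem_of_mem hδ x
    have hxT := hx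
    rw [hT] at hxT
    simp only [Set.mem_iUnion] at hxT
    obtain ⟨i, hxi⟩ := hxT
    have hkK : k ∈ hAfin.toFinset ∪ B := by
      by_cases ha : a i ∈ Set.Icc ((k : ℝ) * δ) (k * δ + δ)
      · apply Finset.mem_union_right
        rcases mem_cell_floor_or_ceil hδ ha with h | h <;>
        · rw [hB]; simp only [Finset.mem_biUnion, Finset.mem_univ, Finset.mem_insert,
            Finset.mem_singleton, true_and]
          exact ⟨i, by tauto⟩
      · by_cases hb : b i ∈ Set.Icc ((k : ℝ) * δ) (k * δ + δ)
        · apply Finset.mem_union_right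
          rcases mem_cell_floor_or_ceil hδ hb with h | h <;>
          · rw [hB]; simp only [Finset.mem_biUnion, Finset.mem_univ, Finset.mem_insert,
              Finset.mem_singleton, true_and]
            exact ⟨i, by tauto⟩
        · apply Finset.mem_union_left
          rw [Set.Finite.mem_toFinset]
          show Set.Icc ((k : ℝ) * δ) (k * δ + δ) ⊆ T
          have ha' : a i < k * δ := by
            simp only [Set.mem_Icc, not_and_or, not_le] at ha
            rcases ha with h | h
            · exact h
            · exfalso; obtain ⟨h1, h2⟩ := hxi; obtain ⟨h3, h4⟩ := hxc; linarith
          have hb' : k * δ + δ < b i := by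
            simp only [Set.mem_Icc, not_and_or, not_le] at hb
            rcases hb with h | h
            · exfalso; obtain ⟨h1, h2⟩ := hxi; obtain ⟨h3, h4⟩ := hxc; linarith
            · exact h
          refine subset_trans (Set.Icc_subset_Icc ha'.le hb'.le) ?_
          rw [hT]; exact Set.subset_iUnion (fun j => Set.Icc (a j) (b j)) i
    exact Set.mem_biUnion hkK hxc
/-- If `S ⊆ ℝ` admits covers `S ⊆ S_n`, where `S_n` is a union of `q_n` intervals,
`q_n → ∞`, and `|S_n| < C / q_n ^ β` for positive constants `C`, `β`, then the
Hausdorff dimension of `S` is at most `1 / (1 + β)`. -/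
theorem stmt_6 (S : Set ℝ) (C β : ℝ) (hC : 0 < C) (hβ : 0 < β)
    (q : ℕ → ℕ) (Sn : ℕ → Set ℝ)
    (hq : Filter.Tendsto q Filter.atTop Filter.atTop)
    (hcover : ∀ n, S ⊆ Sn n)
    (hintervals : ∀ n, ∃ I : Fin (q n) → Set ℝ,
      (∀ i, ∃ a b : ℝ, I i = Set.Icc a b) ∧ Sn n = ⋃ i, I i)
    (hmeas : ∀ n, volume (Sn n) < ENNReal.ofReal (C / (q n : ℝ) ^ β)) :
    dimH S ≤ ENNReal.ofReal (1 / (1 + β)) := by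
  have hq1 : ∀ n, 0 < q n := by
    intro n
    rcases Nat.eq_zero_or_pos (q n) with h | h
    · exfalso
      have := hmeas n
      rw [h] at this
      simp [Real.zero_rpow hβ.ne'] at this
    · exact h
  have hβ1 : (0:ℝ) < 1 + β := by linarith
  have key : ∀ d : ℝ, 1 / (1 + β) < d → μH[d] S = 0 := by
    intro d hd
    have hd0 : 0 < d := lt_trans (by positivity) hd
    set δ : ℕ → ℝ := fun n => C / (q n : ℝ) ^ (1 + β) with hδdef
    have hqR : ∀ n, (0:ℝ) < (q n : ℝ) := fun n => by exact_mod_cast hq1 n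
    have hδpos : ∀ n, 0 < δ n := fun n => div_pos hC (Real.rpow_pos_of_pos (hqR n) _)
    have hcov : ∀ n, ∃ K : Finset ℤ, K.card ≤ 5 * q n ∧
        Sn n ⊆ ⋃ k ∈ K, Set.Icc ((k:ℝ) * δ n) ((k:ℝ) * δ n + δ n) := by
      intro n
      obtain ⟨I, hI, hSn⟩ := hintervals n
      choose a b hab using hI
      apply grid_lemma (q n) (δ n) (hδpos n) a b
        (by rw [hSn]; exact Set.iUnion_congr fun i => hab i)
      have heq : (q n : ℝ) * δ n = C / (q n : ℝ) ^ β := by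
        rw [hδdef]
        simp only
        rw [Real.rpow_add (hqR n), Real.rpow_one]
        have h1 : ((q n : ℝ)) ≠ 0 := (hqR n).ne'
        have h2 : ((q n : ℝ)) ^ β ≠ 0 := (Real.rpow_pos_of_pos (hqR n) β).ne'
        field_simp
      rw [heq]
      exact hmeas n
    choose K hKcard hKcov using hcov
    have hr : Filter.Tendsto (fun n => ENNReal.ofReal (δ n)) Filter.atTop (nhds 0) := by
      have h1 : Filter.Tendsto (fun n => ((q n : ℝ)) ^ (-(1 + β))) Filter.atTop (nhds 0) :=
        (tendsto_rpow_neg_atTop hβ1).comp (tendsto_natCast_atTop_atTop.comp hq)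
      have h2 := h1.const_mul C
      rw [mul_zero] at h2
      have hreal : Filter.Tendsto (fun n => δ n) Filter.atTop (nhds 0) := by
        refine h2.congr fun n => ?_
        rw [Real.rpow_neg (hqR n).le]
        exact (div_eq_mul_inv C _).symm
      have := (ENNReal.continuous_ofReal.tendsto 0).comp hreal
      simpa [Function.comp_def] using this
    have ht : ∀ᶠ n in Filter.atTop, ∀ i : (K n : Finset ℤ),
        Metric.ediam (Set.Icc (((i : ℤ) : ℝ) * δ n) (((i : ℤ) : ℝ) * δ n + δ n))
          ≤ ENNReal.ofReal (δ n) := by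
      refine Filter.Eventually.of_forall fun n => fun i => ?_
      rw [Real.ediam_Icc]
      exact le_of_eq (by congr 1; ring)
    have hst : ∀ᶠ n in Filter.atTop, S ⊆ ⋃ i : (K n : Finset ℤ),
        Set.Icc (((i : ℤ) : ℝ) * δ n) (((i : ℤ) : ℝ) * δ n + δ n) := by
      refine Filter.Eventually.of_forall fun n => subset_trans (hcover n) ?_
      refine subset_trans (hKcov n) ?_
      intro x hx
      simp only [Set.mem_iUnion] at hx ⊢
      obtain ⟨k, hk, hx⟩ := hx
      exact ⟨⟨k, hk⟩, hx⟩
    have hml := MeasureTheory.Measure.hausdorffMeasure_le_liminf_sum (X := ℝ)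
        (l := Filter.atTop) d S (fun n => ENNReal.ofReal (δ n)) hr
        (fun n (k : (K n : Finset ℤ)) =>
          Set.Icc (((k : ℤ) : ℝ) * δ n) (((k : ℤ) : ℝ) * δ n + δ n)) ht hst
    set u : ℕ → ℝ≥0∞ := fun n =>
      ((5 * q n : ℕ) : ℝ≥0∞) * ENNReal.ofReal (δ n) ^ d with hu
    -- u tends to 0
    have hexp : 0 < (1 + β) * d - 1 := by
      have := (div_lt_iff₀ hβ1).1 hd
      nlinarith
    have hv : Filter.Tendsto (fun n => ((5 * q n : ℕ) : ℝ) * δ n ^ d)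
        Filter.atTop (nhds 0) := by
      have h1 : Filter.Tendsto (fun n => ((q n : ℝ)) ^ (-((1 + β) * d - 1)))
          Filter.atTop (nhds 0) :=
        (tendsto_rpow_neg_atTop hexp).comp (tendsto_natCast_atTop_atTop.comp hq)
      have h2 := h1.const_mul (5 * C ^ d)
      rw [mul_zero] at h2
      refine h2.congr fun n => ?_
      have hqn := hqR n
      have e1 : δ n ^ d = C ^ d / (q n : ℝ) ^ ((1 + β) * d) := by
        rw [hδdef]
        simp only
        rw [Real.div_rpow hC.le (Real.rpow_nonneg hqn.le _), ← Real.rpow_mul hqn.le]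
      have e2 : ((q n : ℝ)) ^ (-((1 + β) * d - 1)) = (q n : ℝ) / (q n : ℝ) ^ ((1 + β) * d) := by
        rw [neg_sub, Real.rpow_sub hqn, Real.rpow_one]
      rw [e1, e2]
      have h3 : ((q n : ℝ)) ^ ((1 + β) * d) ≠ 0 := (Real.rpow_pos_of_pos hqn _).ne'
      push_cast
      field_simp
    have hu0 : Filter.Tendsto u Filter.atTop (nhds 0) := by
      have := (ENNReal.continuous_ofReal.tendsto 0).comp hv
      simp only [ENNReal.ofReal_zero, Function.comp_def] at this
      refine this.congr fun n => ?_
      rw [hu]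
      simp only
      rw [ENNReal.ofReal_mul (by positivity), ENNReal.ofReal_natCast,
        ENNReal.ofReal_rpow_of_pos (hδpos n)]
    refine le_zero_iff.1 (hml.trans ?_)
    refine le_of_le_of_eq
      (Filter.liminf_le_liminf (Filter.Eventually.of_forall fun n => ?_)) hu0.liminf_eq
    -- ∑ ≤ u n
    have hterm : ∀ i : (K n : Finset ℤ),
        Metric.ediam (Set.Icc (((i : ℤ)) * δ n) (((i : ℤ)) * δ n + δ n)) ^ d
          = ENNReal.ofReal (δ n) ^ d := by
      intro i
      rw [Real.ediam_Icc]
      congr 1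
      congr 1
      ring
    calc (∑ i : (K n : Finset ℤ),
        Metric.ediam (Set.Icc (((i : ℤ)) * δ n) (((i : ℤ)) * δ n + δ n)) ^ d)
        = (K n).card • ENNReal.ofReal (δ n) ^ d := by
          rw [Finset.sum_congr rfl fun i _ => hterm i, Finset.sum_const, Finset.card_univ,
            Fintype.card_coe]
      _ ≤ (5 * q n) • ENNReal.ofReal (δ n) ^ d := by
          exact nsmul_le_nsmul_left (by positivity) (hKcard n)
      _ = u n := by rw [hu]; simp [nsmul_eq_mul]
  refine dimH_le fun d' hd' => ?_
  by_contra hlt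
  push_neg at hlt
  rw [← ENNReal.ofReal_coe_nnreal] at hlt
  have h1β : 0 ≤ 1 / (1 + β) := by positivity
  have : 1 / (1 + β) < (d' : ℝ) := (ENNReal.ofReal_lt_ofReal_iff_of_nonneg h1β).1 hlt
  rw [key (d' : ℝ) this] at hd'
  exact (ENNReal.zero_ne_top) hd'
end

section
/- The n×n matrix T over ℂ whose rows are: row j (for odd j ≤ n-1) has entries z_j at column j and z_{j+1} at column j+1 and zeros elsewhere, row j (for even j ≤ n-2) has 1 at columns j and j+1, and last row has 1 at columns 1 and n (where each z_j is a unit complex number), has rank n if ∏_{j even} z_j / ∏_{j odd} z_j ≠ 1 in the sense that 1 - e^{i∑(-1)^j β_j} ≠ 0, and rank n-1 otherwise. Equivalently: det T = ±(∏_{j odd} z_j)(1 - ∏_j z_j^{(-1)^j}). -/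
open Real

section Aux

variable {n : ℕ}

open Fin.NatCast

/-- rank is subadditive. -/
lemma aux_rank_add_le (A B : Matrix (Fin n) (Fin n) ℂ) :
    (A + B).rank ≤ A.rank + B.rank := by
  rw [Matrix.rank, Matrix.rank, Matrix.rank, Matrix.mulVecLin_add]
  have h : LinearMap.range (A.mulVecLin + B.mulVecLin) ≤
      LinearMap.range A.mulVecLin ⊔ LinearMap.range B.mulVecLin := by
    rintro x ⟨y, rfl⟩
    exact Submodule.mem_sup.2 ⟨A.mulVecLin y, ⟨y, rfl⟩, B.mulVecLin y, ⟨y, rfl⟩, rfl⟩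
  exact (Submodule.finrank_mono h).trans
    (Submodule.finrank_add_le_finrank_add_finrank _ _)

/-- A matrix with a single (possibly) nonzero entry has rank at most 1. -/
lemma aux_rank_single_le (i₀ j₀ : Fin n) (e : ℂ) :
    (Matrix.of fun i j : Fin n => if i = i₀ ∧ j = j₀ then e else 0).rank ≤ 1 := by
  classical
  set u : Fin n → ℂ := Pi.single i₀ 1 with hu
  have hrange : LinearMap.range (Matrix.of fun i j : Fin n =>
      if i = i₀ ∧ j = j₀ then e else 0).mulVecLin ≤ Submodule.span ℂ {u} := by
    rintro x ⟨y, rfl⟩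
    have : (Matrix.of fun i j : Fin n => if i = i₀ ∧ j = j₀ then e else 0).mulVec y
        = (e * y j₀) • u := by
      funext i
      simp only [Matrix.mulVec, dotProduct, Matrix.of_apply]
      by_cases hi : i = i₀
      · subst hi
        rw [Finset.sum_eq_single j₀]
        · simp [hu, Pi.single_apply]
        · intro b _ hb; simp [hb]
        · simp
      · rw [Finset.sum_eq_zero]
        · simp [hu, Pi.single_apply, Ne.symm, hi]
        · intro b _; simp [hi]
    rw [Matrix.mulVecLin_apply, this]
    exact Submodule.smul_mem _ _ (Submodule.mem_span_singleton_self _)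
  have hu0 : u ≠ 0 := by
    intro h
    have := congrFun h i₀
    simp [hu] at this
  calc (Matrix.of fun i j : Fin n => if i = i₀ ∧ j = j₀ then e else 0).rank
      ≤ Module.finrank ℂ (Submodule.span ℂ {u}) := Submodule.finrank_mono hrange
    _ = 1 := finrank_span_singleton hu0

/-- Determinant of the cyclic bidiagonal matrix, for even `n`. -/
lemma aux_det_cyclic [NeZero n] (hn : 2 ≤ n) (hne : Even n) (c d : Fin n → ℂ) :
    (Matrix.of fun i j : Fin n =>
        if j = i then c i else if j = i + 1 then d i else 0).det
      = ∏ i, c i - ∏ i, d i := by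
  classical
  set M : Matrix (Fin n) (Fin n) ℂ :=
    Matrix.of fun i j : Fin n => if j = i then c i else if j = i + 1 then d i else 0 with hM
  have h10 : (1 : Fin n) ≠ 0 := by
    intro h
    have := congrArg Fin.val h
    rw [Fin.val_one'] at this
    simp at this
    omega
  set σ₂ : Equiv.Perm (Fin n) := Equiv.subRight (1 : Fin n) with hσ₂
  have hσ₂app : ∀ x : Fin n, σ₂ x = x - 1 := fun x => rfl
  -- only two permutations contribute
  have key : ∀ σ : Equiv.Perm (Fin n), σ ≠ 1 → σ ≠ σ₂ → ∏ i, M (σ i) i = 0 := by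
    intro σ hσ1 hσ2
    by_contra hprod
    have hne0 : ∀ i : Fin n, M (σ i) i ≠ 0 := by
      intro i
      exact Finset.prod_ne_zero_iff.1 hprod i (Finset.mem_univ i)
    have hcase : ∀ i : Fin n, σ i = i ∨ σ i = i - 1 := by
      intro i
      have := hne0 i
      rw [hM] at this
      simp only [Matrix.of_apply] at this
      by_cases h1 : i = σ i
      · exact Or.inl h1.symm
      · by_cases h2 : i = σ i + 1
        · exact Or.inr (eq_sub_of_add_eq h2.symm)
        · simp [h1, h2] at this
    obtain ⟨i, hi⟩ : ∃ i : Fin n, σ i ≠ i := by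
      by_contra h
      push_neg at h
      exact hσ1 (Equiv.ext h)
    have hi' : σ i = i - 1 := (hcase i).resolve_left hi
    have step : ∀ x : Fin n, σ x = x - 1 → σ (x - 1) = x - 1 - 1 := by
      intro x hx
      rcases hcase (x - 1) with h | h
      · exfalso
        have : x - 1 = x := σ.injective (by rw [h, hx])
        rw [sub_eq_self] at this
        exact h10 this
      · exact h
    have all : ∀ k : ℕ, σ (i - (k : Fin n)) = i - (k : Fin n) - 1 := by
      intro k
      induction k with
      | zero => simpa using hi'
      | succ k ih =>
        have hcast : ((k + 1 : ℕ) : Fin n) = (k : Fin n) + 1 := by push_cast; ring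
        rw [hcast, sub_add_eq_sub_sub]
        exact step _ ih
    apply hσ2
    ext j
    have hj : i - (((i - j : Fin n) : ℕ) : Fin n) = j := by
      rw [Fin.cast_val_eq_self]; exact sub_sub_cancel i j
    have := all ((i - j : Fin n) : ℕ)
    rw [hj] at this
    rw [this, hσ₂app]
  -- reduce the sum to two terms
  rw [Matrix.det_apply]
  have h1σ₂ : (1 : Equiv.Perm (Fin n)) ≠ σ₂ := by
    intro h
    have := congrArg (fun σ : Equiv.Perm (Fin n) => σ 0) h
    simp only [Equiv.Perm.one_apply, hσ₂app] at this
    rw [zero_sub] at this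
    exact h10 (by rw [← neg_neg (1 : Fin n), ← this, neg_zero])
  rw [← Finset.sum_subset (Finset.subset_univ ({1, σ₂} : Finset (Equiv.Perm (Fin n))))
    (by
      intro σ _ hσ
      simp only [Finset.mem_insert, Finset.mem_singleton] at hσ
      push_neg at hσ
      rw [key σ hσ.1 hσ.2, smul_zero])]
  rw [Finset.sum_pair h1σ₂]
  -- compute the two products
  have hdiag : ∏ i : Fin n, M ((1 : Equiv.Perm (Fin n)) i) i = ∏ i, c i := by
    apply Finset.prod_congr rfl
    intro i _
    simp [hM]
  have hoff : ∏ i : Fin n, M (σ₂ i) i = ∏ i, d i := by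
    have h1 : ∏ i : Fin n, M (σ₂ i) i = ∏ i : Fin n, d (i - 1) := by
      apply Finset.prod_congr rfl
      intro i _
      rw [hσ₂app, hM]
      simp only [Matrix.of_apply]
      have hne : i ≠ i - 1 := by
        intro h
        rw [eq_sub_iff_add_eq, add_eq_left] at h
        exact h10 h
      rw [if_neg (fun h => hne h), if_pos (by rw [sub_add_cancel])]
    rw [h1]
    exact Equiv.prod_comp (Equiv.subRight (1 : Fin n)) d
  -- signs
  have hsign1 : Equiv.Perm.sign (1 : Equiv.Perm (Fin n)) = 1 := by simp
  have hsign2 : Equiv.Perm.sign σ₂ = -1 := by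
    obtain ⟨m, hm⟩ : ∃ m, n = m + 1 := ⟨n - 1, by omega⟩
    subst hm
    have hrot : σ₂⁻¹ = finRotate (m + 1) := by
      ext x
      have : σ₂⁻¹ = (Equiv.subRight (1 : Fin (m + 1))).symm := rfl
      rw [this, finRotate_succ_apply]
      simp [Equiv.subRight_symm_apply]
    have hodd : Odd m := by
      rcases hne with ⟨t, ht⟩
      exact ⟨t - 1, by omega⟩
    rw [← Equiv.Perm.sign_inv, hrot, sign_finRotate, Nat.add_sub_cancel, hodd.neg_one_pow]
  rw [hdiag, hoff, hsign1, hsign2, one_smul, Units.neg_smul, one_smul]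
  ring
end Aux


/-- Let `n` be even, `β j` real, and `T` the `n × n` matrix whose (0-indexed) even rows
have entries `e^{iβ_j}, e^{iβ_{j+1}}` at columns `j, j+1`, and whose odd rows have `1` at
columns `j` and `(j+1) mod n` (so the last row has `1` at the first and last columns).
Then `T` has rank `n` if `∑_j (-1)^{j+1} β_j ∉ 2πℤ`, and rank `n - 1` otherwise. -/
theorem stmt_8 (n : ℕ) (hn : 0 < n) (hne : Even n) (β : Fin n → ℝ) :
    ((¬ ∃ k : ℤ, ∑ j : Fin n, (-1 : ℝ) ^ ((j : ℕ) + 1) * β j = 2 * π * k) →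
      (Matrix.of (fun i j : Fin n =>
        if (i : ℕ) % 2 = 0 then
          (if (j : ℕ) = (i : ℕ) ∨ (j : ℕ) = (i : ℕ) + 1 then
            Complex.exp (Complex.I * (β j : ℂ)) else 0)
        else
          (if (j : ℕ) = (i : ℕ) ∨ (j : ℕ) = ((i : ℕ) + 1) % n then 1 else 0))).rank = n) ∧
    ((∃ k : ℤ, ∑ j : Fin n, (-1 : ℝ) ^ ((j : ℕ) + 1) * β j = 2 * π * k) →
      (Matrix.of (fun i j : Fin n =>
        if (i : ℕ) % 2 = 0 then
          (if (j : ℕ) = (i : ℕ) ∨ (j : ℕ) = (i : ℕ) + 1 then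
            Complex.exp (Complex.I * (β j : ℂ)) else 0)
        else
          (if (j : ℕ) = (i : ℕ) ∨ (j : ℕ) = ((i : ℕ) + 1) % n then 1 else 0))).rank = n - 1) := by
  classical
  haveI : NeZero n := ⟨hn.ne'⟩
  have hn2 : 2 ≤ n := by
    rcases hne with ⟨t, ht⟩; omega
  have hnmod : n % 2 = 0 := by rcases hne with ⟨t, ht⟩; omega
  have hne1 : n ≠ 1 := by omega
  have hval1 : ((1 : Fin n) : ℕ) = 1 := by
    rw [Fin.val_one', Nat.mod_eq_of_lt (by omega : 1 < n)]
  have hvaladd : ∀ i : Fin n, ((i + 1 : Fin n) : ℕ) = ((i : ℕ) + 1) % n := by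
    intro i; rw [Fin.val_add, hval1]
  -- the structured description of the matrix
  set c : Fin n → ℂ := fun i =>
    if (i : ℕ) % 2 = 0 then Complex.exp (Complex.I * (β i : ℂ)) else 1 with hc
  set d : Fin n → ℂ := fun i =>
    if (i : ℕ) % 2 = 0 then Complex.exp (Complex.I * (β (i + 1) : ℂ)) else 1 with hd
  set M : Matrix (Fin n) (Fin n) ℂ := Matrix.of (fun i j : Fin n =>
        if (i : ℕ) % 2 = 0 then
          (if (j : ℕ) = (i : ℕ) ∨ (j : ℕ) = (i : ℕ) + 1 then
            Complex.exp (Complex.I * (β j : ℂ)) else 0)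
        else
          (if (j : ℕ) = (i : ℕ) ∨ (j : ℕ) = ((i : ℕ) + 1) % n then 1 else 0)) with hMdef
  have hMeq : M = Matrix.of (fun i j : Fin n =>
      if j = i then c i else if j = i + 1 then d i else 0) := by
    funext i j
    have hlt : ∀ k : Fin n, (k : ℕ) % 2 = 0 → (k : ℕ) + 1 < n := by
      intro k hk
      have := k.isLt
      omega
    by_cases hp : (i : ℕ) % 2 = 0
    · have hi1 : ((i + 1 : Fin n) : ℕ) = (i : ℕ) + 1 := by
        rw [hvaladd, Nat.mod_eq_of_lt (hlt i hp)]
      by_cases hji : j = i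
      · subst hji
        simp [hMdef, hc, hp]
      · by_cases hj1 : j = i + 1
        · subst hj1
          have hne' : ¬ ((i + 1 : Fin n) : ℕ) = (i : ℕ) := by
            rw [hi1]; omega
          simp [hMdef, hd, hc, hp, hne', hi1, hne1]
        · have h1 : ¬ (j : ℕ) = (i : ℕ) := fun h => hji (Fin.ext h)
          have h2 : ¬ (j : ℕ) = (i : ℕ) + 1 := by
            intro h
            exact hj1 (Fin.ext (by rw [hi1, ← h]))
          simp [hMdef, hp, h1, h2, hji, hj1]
    · by_cases hji : j = i
      · subst hji
        simp [hMdef, hc, hp]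
      · by_cases hj1 : j = i + 1
        · subst hj1
          have hne' : ¬ ((i + 1 : Fin n) : ℕ) = (i : ℕ) := by
            rw [hvaladd]
            intro h
            have := i.isLt
            rcases Nat.lt_or_ge ((i : ℕ) + 1) n with h' | h'
            · rw [Nat.mod_eq_of_lt h'] at h; omega
            · have hin : (i : ℕ) + 1 = n := by omega
              rw [hin, Nat.mod_self] at h
              omega
          simp [hMdef, hd, hp, hne', hvaladd, hne1]
        · have h1 : ¬ (j : ℕ) = (i : ℕ) := fun h => hji (Fin.ext h)
          have h2 : ¬ (j : ℕ) = ((i : ℕ) + 1) % n := by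
            intro h
            exact hj1 (Fin.ext (by rw [hvaladd, ← h]))
          simp [hMdef, hp, h1, h2, hji, hj1]
  -- the determinant
  have hdet : M.det = ∏ i, c i - ∏ i, d i := by
    rw [hMeq]; exact aux_det_cyclic hn2 hne c d
  -- products as exponentials
  set Se : ℝ := ∑ i : Fin n, (if (i : ℕ) % 2 = 0 then β i else 0) with hSe
  set So : ℝ := ∑ i : Fin n, (if (i : ℕ) % 2 = 0 then 0 else β i) with hSo
  have hprodc : ∏ i, c i = Complex.exp (Complex.I * (Se : ℂ)) := by
    have h1 : ∀ i : Fin n, c i =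
        Complex.exp (Complex.I * ((if (i : ℕ) % 2 = 0 then β i else 0 : ℝ) : ℂ)) := by
      intro i
      by_cases hp : (i : ℕ) % 2 = 0 <;> simp [hc, hp]
    rw [Finset.prod_congr rfl (fun i _ => h1 i), ← Complex.exp_sum]
    have h2 : ((Se : ℝ) : ℂ) =
        ∑ i : Fin n, ((if (i : ℕ) % 2 = 0 then β i else 0 : ℝ) : ℂ) := by
      rw [hSe, Complex.ofReal_sum]
    rw [h2, Finset.mul_sum]
  have hprodd : ∏ i, d i = Complex.exp (Complex.I * (So : ℂ)) := by
    have h1 : ∀ i : Fin n, d i =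
        Complex.exp (Complex.I * ((if (i : ℕ) % 2 = 0 then β (i + 1) else 0 : ℝ) : ℂ)) := by
      intro i
      by_cases hp : (i : ℕ) % 2 = 0 <;> simp [hd, hp]
    rw [Finset.prod_congr rfl (fun i _ => h1 i), ← Complex.exp_sum]
    have h2 : (∑ i : Fin n, (if (i : ℕ) % 2 = 0 then β (i + 1) else 0)) = So := by
      rw [hSo]
      apply Fintype.sum_equiv (Equiv.addRight (1 : Fin n))
      intro i
      have hiv := i.isLt
      by_cases hp : (i : ℕ) % 2 = 0
      · have hlt : (i : ℕ) + 1 < n := by omega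
        have hv : ((i + 1 : Fin n) : ℕ) = (i : ℕ) + 1 := by
          rw [hvaladd, Nat.mod_eq_of_lt hlt]
        simp only [Equiv.coe_addRight]
        have hq : ¬ ((i + 1 : Fin n) : ℕ) % 2 = 0 := by rw [hv]; omega
        rw [if_pos hp]; simp [hq]
      · by_cases hl : (i : ℕ) + 1 < n
        · have hv : ((i + 1 : Fin n) : ℕ) = (i : ℕ) + 1 := by
            rw [hvaladd, Nat.mod_eq_of_lt hl]
          simp only [Equiv.coe_addRight]
          have hq : ((i + 1 : Fin n) : ℕ) % 2 = 0 := by rw [hv]; omega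
          rw [if_neg hp]; simp [hq]
        · have hin : (i : ℕ) + 1 = n := by omega
          have hv : ((i + 1 : Fin n) : ℕ) = 0 := by
            rw [hvaladd, hin, Nat.mod_self]
          simp only [Equiv.coe_addRight]
          rw [if_neg hp]; simp [hv]
    have h3 : ((So : ℝ) : ℂ) =
        ∑ i : Fin n, ((if (i : ℕ) % 2 = 0 then β (i + 1) else 0 : ℝ) : ℂ) := by
      rw [← h2, Complex.ofReal_sum]
    rw [h3, Finset.mul_sum]
  -- the statement's sum equals So - Se
  have hsum : (∑ j : Fin n, (-1 : ℝ) ^ ((j : ℕ) + 1) * β j) = So - Se := by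
    rw [hSo, hSe, ← Finset.sum_sub_distrib]
    apply Finset.sum_congr rfl
    intro i _
    by_cases hp : (i : ℕ) % 2 = 0
    · have hodd : Odd ((i : ℕ) + 1) := Nat.odd_iff.2 (by omega)
      rw [hodd.neg_one_pow, if_pos hp, if_pos hp]
      ring
    · have heven : Even ((i : ℕ) + 1) := Nat.even_iff.2 (by omega)
      rw [heven.neg_one_pow, if_neg hp, if_neg hp]
      ring
  -- det = 0 iff the condition holds
  have hiff : M.det = 0 ↔ ∃ k : ℤ, So - Se = 2 * π * k := by
    rw [hdet, hprodc, hprodd, sub_eq_zero]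
    rw [Complex.exp_eq_exp_iff_exists_int]
    constructor
    · rintro ⟨k, hk⟩
      refine ⟨-k, ?_⟩
      have h2 : Complex.I * ((Se : ℂ) - (So : ℂ)) = Complex.I * ((k : ℂ) * (2 * π)) := by
        rw [mul_sub, sub_eq_iff_eq_add, hk]; ring
      have h3 : ((Se : ℂ) - (So : ℂ)) = (k : ℂ) * (2 * π) :=
        mul_left_cancel₀ Complex.I_ne_zero h2
      have h4 : (Se : ℝ) - So = (k : ℝ) * (2 * π) := by
        exact_mod_cast h3
      push_cast
      linarith
    · rintro ⟨k, hk⟩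
      refine ⟨-k, ?_⟩
      have h4 : (Se : ℂ) = (So : ℂ) + ((-k : ℤ) : ℂ) * (2 * π) := by
        have : (Se : ℝ) = So + ((-k : ℤ) : ℝ) * (2 * π) := by push_cast; linarith
        exact_mod_cast this
      rw [h4]
      push_cast
      ring
  constructor
  · -- full rank case
    intro hk
    rw [hsum] at hk
    have hdet0 : M.det ≠ 0 := fun h => hk (hiff.1 h)
    rw [Matrix.rank_of_isUnit M ((Matrix.isUnit_iff_isUnit_det M).2
      (isUnit_iff_ne_zero.2 hdet0)), Fintype.card_fin]
  · -- degenerate case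
    intro hk
    rw [hsum] at hk
    have hdet0 : M.det = 0 := hiff.2 hk
    -- upper bound
    have hub : M.rank ≤ n - 1 := by
      obtain ⟨v, hv0, hv⟩ := Matrix.exists_mulVec_eq_zero_iff.2 hdet0
      have hninj : ¬ Function.Injective M.mulVecLin := by
        intro h
        apply hv0
        apply h
        rw [Matrix.mulVecLin_apply, hv, map_zero]
      have hrange : LinearMap.range M.mulVecLin ≠ ⊤ := by
        intro h
        exact hninj (LinearMap.injective_iff_surjective.2
          (LinearMap.range_eq_top.1 h))
      have hlt := Submodule.finrank_lt (K := ℂ) (V := Fin n → ℂ)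
        hrange
      rw [Module.finrank_pi, Fintype.card_fin] at hlt
      rw [Matrix.rank]
      omega
    -- lower bound via triangular modification
    set i₀ : Fin n := ⟨n - 1, by omega⟩ with hi₀
    have hi₀v : (i₀ : ℕ) = n - 1 := rfl
    have hi₀1 : ((i₀ + 1 : Fin n) : ℕ) = 0 := by
      rw [hvaladd, hi₀v]
      have hh : n - 1 + 1 = n := by omega
      rw [hh, Nat.mod_self]
    have h01 : i₀ + 1 ≠ i₀ := by
      intro h
      have hv := congrArg Fin.val h
      rw [hi₀1, hi₀v] at hv
      omega
    set D : Matrix (Fin n) (Fin n) ℂ := Matrix.of (fun i j : Fin n =>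
      if i = i₀ ∧ j = i₀ + 1 then -(d i₀) else 0) with hD
    have htri : (M + D).BlockTriangular id := by
      intro i j hij
      simp only [id_eq] at hij
      rw [Fin.lt_def] at hij
      simp only [Matrix.add_apply, hMeq, hD, Matrix.of_apply]
      have hji' : ¬ j = i := by
        intro h; subst h; omega
      by_cases hii : i = i₀
      · subst hii
        by_cases hj1 : j = i₀ + 1
        · subst hj1
          rw [if_neg hji', if_pos rfl, if_pos ⟨rfl, rfl⟩]
          ring
        · rw [if_neg hji', if_neg hj1, if_neg (fun h => hj1 h.2), add_zero]
      · have hj1 : ¬ j = i + 1 := by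
          intro h
          have hv := congrArg Fin.val h
          rw [hvaladd] at hv
          have := i.isLt
          rcases Nat.lt_or_ge ((i : ℕ) + 1) n with h' | h'
          · rw [Nat.mod_eq_of_lt h'] at hv; omega
          · exact hii (Fin.ext (by rw [hi₀v]; omega))
        rw [if_neg hji', if_neg hj1, if_neg (fun h => hii h.1), add_zero]
    have hdiag : ∀ i, (M + D) i i = c i := by
      intro i
      simp only [Matrix.add_apply, hMeq, hD, Matrix.of_apply]
      rw [if_true, if_neg, add_zero]
      rintro ⟨h1, h2⟩
      exact h01 (h2.symm.trans h1)
    have hdet' : (M + D).det = ∏ i, c i := by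
      rw [Matrix.det_of_upperTriangular htri]
      exact Finset.prod_congr rfl (fun i _ => hdiag i)
    have hcne : ∏ i, c i ≠ 0 := by
      rw [Finset.prod_ne_zero_iff]
      intro i _
      by_cases hp : (i : ℕ) % 2 = 0 <;> simp [hc, hp, Complex.exp_ne_zero]
    have hrank' : (M + D).rank = n := by
      rw [Matrix.rank_of_isUnit (M + D) ((Matrix.isUnit_iff_isUnit_det (M + D)).2
        (isUnit_iff_ne_zero.2 (by rw [hdet']; exact hcne))), Fintype.card_fin]
    have hrankD : D.rank ≤ 1 := aux_rank_single_le i₀ (i₀ + 1) (-(d i₀))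
    have hlb : n ≤ M.rank + 1 := by
      calc n = (M + D).rank := hrank'.symm
        _ ≤ M.rank + D.rank := aux_rank_add_le M D
        _ ≤ M.rank + 1 := by omega
    omega
end

section
/- Let A be a bounded operator on a Hilbert space and Q = [[0, A],[A*, 0]] the self-adjoint block operator on H ⊕ H. If 0 ∈ σ(Q), then σ(Q) = √(σ(AA*)) ∪ (-√(σ(AA*))) ∪ {0}, where √S = {√x : x ∈ S} for S ⊆ [0,∞). -/
open ContinuousLinearMap

lemma aux_prodMap_spectrum {E F : Type*} [NormedAddCommGroup E] [NormedSpace ℂ E]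
    [CompleteSpace E] [NormedAddCommGroup F] [NormedSpace ℂ F] [CompleteSpace F]
    (f : E →L[ℂ] E) (g : F →L[ℂ] F) :
    spectrum ℂ (f.prodMap g) = spectrum ℂ f ∪ spectrum ℂ g := by
  ext z
  have key : (algebraMap ℂ ((E × F) →L[ℂ] (E × F)) z - f.prodMap g)
      = (algebraMap ℂ (E →L[ℂ] E) z - f).prodMap (algebraMap ℂ (F →L[ℂ] F) z - g) := by
    ext x <;>
      simp [Algebra.algebraMap_eq_smul_one, ContinuousLinearMap.coe_prodMap', Prod.map]
  simp only [spectrum.mem_iff, Set.mem_union, key,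
    ContinuousLinearMap.isUnit_iff_bijective, ContinuousLinearMap.coe_prodMap',
    Prod.map_bijective]
  tauto

/-- Let `A` be a bounded operator on a Hilbert space `H` and let `Q = [[0, A], [A*, 0]]`
be the block operator on `H ⊕ H`. If `0 ∈ σ(Q)`, then
`σ(Q) = √(σ(AA*)) ∪ (-√(σ(AA*))) ∪ {0}` (square roots of the real points of `σ(AA*)`). -/
theorem stmt_13 {H : Type*} [NormedAddCommGroup H] [InnerProductSpace ℂ H]
    [CompleteSpace H] (A : H →L[ℂ] H)
    (Q : (H × H) →L[ℂ] (H × H))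
    (hQ : ∀ x : H × H, Q x = (A x.2, ContinuousLinearMap.adjoint A x.1))
    (h0 : (0 : ℂ) ∈ spectrum ℂ Q) :
    spectrum ℂ Q =
      (fun x : ℝ => (Real.sqrt x : ℂ)) ''
          {x : ℝ | (x : ℂ) ∈ spectrum ℂ (A ∘L ContinuousLinearMap.adjoint A)}
        ∪ (fun x : ℝ => (-(Real.sqrt x) : ℂ)) ''
          {x : ℝ | (x : ℂ) ∈ spectrum ℂ (A ∘L ContinuousLinearMap.adjoint A)}
        ∪ {0} := by
  set B := ContinuousLinearMap.adjoint A with hB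
  set T := A ∘L B with hT
  set S := B ∘L A with hS
  have hTmul : T = A * star A := by rw [hT, star_eq_adjoint]; rfl
  have hSmul : S = star A * A := by rw [hS, star_eq_adjoint]; rfl
  -- Q² is the block diagonal operator diag(T, S)
  have hQQ : Q ^ 2 = T.prodMap S := by
    ext x <;> simp [sq, mul_apply, hQ, ContinuousLinearMap.coe_prodMap', Prod.map, hT, hS, hB]
  have hnonempty : (spectrum ℂ Q).Nonempty := ⟨0, h0⟩
  have hspec2 : spectrum ℂ (Q ^ 2) = (fun x : ℂ => x ^ 2) '' spectrum ℂ Q :=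
    spectrum.map_pow_of_nonempty hnonempty 2
  have hunion : spectrum ℂ (Q ^ 2) = spectrum ℂ T ∪ spectrum ℂ S := by
    rw [hQQ, aux_prodMap_spectrum]
  have hTsa : IsSelfAdjoint T := hTmul ▸ IsSelfAdjoint.mul_star_self A
  have hTpos : ∀ x ∈ spectrum ℝ T, 0 ≤ x := by
    intro x hx
    refine spectrum_star_mul_self_nonneg (b := star A) x ?_
    rwa [star_star, ← hTmul]
  -- symmetry of the spectrum of Q
  have hsymm : ∀ ν ∈ spectrum ℂ Q, -ν ∈ spectrum ℂ Q := by
    set U : (H × H) →L[ℂ] (H × H) :=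
      (ContinuousLinearMap.id ℂ H).prodMap (-(ContinuousLinearMap.id ℂ H)) with hUdef
    have hU2 : U * U = 1 := by
      ext x <;> simp [mul_apply, hUdef, ContinuousLinearMap.coe_prodMap', Prod.map]
    set u : ((H × H) →L[ℂ] (H × H))ˣ := ⟨U, U, hU2, hU2⟩ with hu
    have hconj : (u : (H × H) →L[ℂ] (H × H)) * Q * (↑u⁻¹ : (H × H) →L[ℂ] (H × H)) = -Q := by
      show U * Q * U = -Q
      ext x <;> simp [mul_apply, hQ, hUdef, ContinuousLinearMap.coe_prodMap', Prod.map]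
    intro ν hν
    have h1 : -ν ∈ -spectrum ℂ Q := Set.neg_mem_neg.mpr hν
    rw [spectrum.neg_eq, ← hconj, spectrum.units_conjugate] at h1
    exact h1
  ext μ
  constructor
  · intro hμ
    by_cases hμ0 : μ = 0
    · exact Or.inr (by simp [hμ0])
    left
    have hsq : μ ^ 2 ∈ spectrum ℂ (Q ^ 2) := by rw [hspec2]; exact ⟨μ, hμ, rfl⟩
    rw [hunion] at hsq
    have hne : μ ^ 2 ≠ 0 := pow_ne_zero _ hμ0
    have hTmem : μ ^ 2 ∈ spectrum ℂ T := by
      rcases hsq with h | h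
      · exact h
      · have hswap := spectrum.nonzero_mul_comm (𝕜 := ℂ) (star A) A
        rw [← hSmul, ← hTmul] at hswap
        have hm : μ ^ 2 ∈ spectrum ℂ S \ {0} := ⟨h, hne⟩
        rw [hswap] at hm
        exact hm.1
    have hre : μ ^ 2 = ((μ ^ 2).re : ℂ) := hTsa.mem_spectrum_eq_re hTmem
    set r : ℝ := (μ ^ 2).re with hr
    have hrT : (r : ℂ) ∈ spectrum ℂ T := hre ▸ hTmem
    have hr0 : 0 ≤ r :=
      hTpos r (spectrum.of_algebraMap_mem ℂ (by simpa using hrT))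
    have hsqrt : ((Real.sqrt r : ℝ) : ℂ) ^ 2 = (r : ℂ) := by
      rw [← Complex.ofReal_pow, Real.sq_sqrt hr0]
    have hfact : (μ - (Real.sqrt r : ℂ)) * (μ + (Real.sqrt r : ℂ)) = 0 := by
      have hexp : (μ - (Real.sqrt r : ℂ)) * (μ + (Real.sqrt r : ℂ))
          = μ ^ 2 - ((Real.sqrt r : ℝ) : ℂ) ^ 2 := by ring
      rw [hexp, hsqrt, hre, sub_self]
    rcases mul_eq_zero.mp hfact with h1 | h1
    · exact Or.inl ⟨r, hrT, (sub_eq_zero.mp h1).symm⟩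
    · exact Or.inr ⟨r, hrT, (eq_neg_of_add_eq_zero_left h1).symm⟩
  · rintro ((⟨x, hx, rfl⟩ | ⟨x, hx, rfl⟩) | hμ)
    rotate_right
    · simp only [Set.mem_singleton_iff] at hμ; exact hμ ▸ h0
    · -- the √x case
      have hx0 : 0 ≤ x := hTpos x (spectrum.of_algebraMap_mem ℂ (by simpa using hx))
      show (Real.sqrt x : ℂ) ∈ spectrum ℂ Q
      rcases eq_or_lt_of_le hx0 with hx0' | hx0'
      · simp only [← hx0', Real.sqrt_zero, Complex.ofReal_zero]
        exact h0
      have hxQ : (x : ℂ) ∈ spectrum ℂ (Q ^ 2) := hunion ▸ Or.inl hx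
      rw [hspec2] at hxQ
      obtain ⟨ν, hν, hν2⟩ := hxQ
      have hν2' : ν ^ 2 = (x : ℂ) := hν2
      have hsqrt : ((Real.sqrt x : ℝ) : ℂ) ^ 2 = (x : ℂ) := by
        rw [← Complex.ofReal_pow, Real.sq_sqrt hx0]
      have hfact : (ν - (Real.sqrt x : ℂ)) * (ν + (Real.sqrt x : ℂ)) = 0 := by
        have hexp : (ν - (Real.sqrt x : ℂ)) * (ν + (Real.sqrt x : ℂ))
            = ν ^ 2 - ((Real.sqrt x : ℝ) : ℂ) ^ 2 := by ring
        rw [hexp, hsqrt, hν2', sub_self]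
      rcases mul_eq_zero.mp hfact with h1 | h1
      · exact (sub_eq_zero.mp h1) ▸ hν
      · have hν' : ν = -(Real.sqrt x : ℂ) := eq_neg_of_add_eq_zero_left h1
        have hsν := hsymm ν hν
        rw [hν', neg_neg] at hsν
        exact hsν
    · -- the -√x case
      have hx0 : 0 ≤ x := hTpos x (spectrum.of_algebraMap_mem ℂ (by simpa using hx))
      show (-(Real.sqrt x) : ℂ) ∈ spectrum ℂ Q
      rcases eq_or_lt_of_le hx0 with hx0' | hx0'
      · simp only [← hx0', Real.sqrt_zero, Complex.ofReal_zero, neg_zero]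
        exact h0
      have hxQ : (x : ℂ) ∈ spectrum ℂ (Q ^ 2) := hunion ▸ Or.inl hx
      rw [hspec2] at hxQ
      obtain ⟨ν, hν, hν2⟩ := hxQ
      have hν2' : ν ^ 2 = (x : ℂ) := hν2
      have hsqrt : ((Real.sqrt x : ℝ) : ℂ) ^ 2 = (x : ℂ) := by
        rw [← Complex.ofReal_pow, Real.sq_sqrt hx0]
      have hfact : (ν - (Real.sqrt x : ℂ)) * (ν + (Real.sqrt x : ℂ)) = 0 := by
        have hexp : (ν - (Real.sqrt x : ℂ)) * (ν + (Real.sqrt x : ℂ))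
            = ν ^ 2 - ((Real.sqrt x : ℝ) : ℂ) ^ 2 := by ring
        rw [hexp, hsqrt, hν2', sub_self]
      rcases mul_eq_zero.mp hfact with h1 | h1
      · have hν' : ν = (Real.sqrt x : ℂ) := sub_eq_zero.mp h1
        have hsν := hsymm ν hν
        rw [hν'] at hsν
        exact hsν
      · exact (eq_neg_of_add_eq_zero_left h1) ▸ hν
end
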